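/- arXiv:1808.07661 — 7 statements merged into one kernel-verified Lean document; each statement's English description precedes it below -/
import Mathlib

section
/- Let μ be a Radon measure on ℝⁿ, x ∈ ℝⁿ, r > 0, and let y ∈ B(x,r/2) and s > 0 with B(y,2s) ⊂ B(x,r). Let L be an affine d-plane in ℝⁿ, c ≥ 0, and set ℒ := c·H^d|_L. If F_{B(x,r)}(μ,ℒ) < s·μ(B(y,s)), then L ∩ B(y,2s) ≠ ∅. -/
open MeasureTheory Metric Set
open scoped ENNReal NNReal

noncomputable section

/-- `F_B(σ,ν)`: sup over 1-Lipschitz functions supported in `B` of `|∫φ dσ − ∫φ dν|`. -/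
def FB {n : ℕ} (B : Set (EuclideanSpace ℝ (Fin n)))
    (σ ν : Measure (EuclideanSpace ℝ (Fin n))) : ℝ :=
  sSup { t : ℝ | ∃ φ : EuclideanSpace ℝ (Fin n) → ℝ,
    LipschitzWith 1 φ ∧ Function.support φ ⊆ B ∧
    t = |(∫ y, φ y ∂σ) - (∫ y, φ y ∂ν)| }

/-- An affine `d`-plane: a nonempty affine subspace whose direction has dimension `d`. -/
def IsAffineDPlane {n : ℕ} (d : ℕ)
    (L : AffineSubspace ℝ (EuclideanSpace ℝ (Fin n))) : Prop :=
  (L : Set (EuclideanSpace ℝ (Fin n))).Nonempty ∧ Module.finrank ℝ L.direction = d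

/-- The coefficient `α_μ^d(x,r)`. -/
def alphaCoef {n : ℕ} (d : ℕ) (μ : Measure (EuclideanSpace ℝ (Fin n)))
    (x : EuclideanSpace ℝ (Fin n)) (r : ℝ) : ℝ :=
  (1 / (r * (μ (ball x r)).toReal)) *
    sInf { t : ℝ | ∃ (c : ℝ) (L : AffineSubspace ℝ (EuclideanSpace ℝ (Fin n))),
      0 ≤ c ∧ IsAffineDPlane d L ∧
      t = FB (ball x r) μ
        ((ENNReal.ofReal c) • (μH[(d:ℝ)]).restrict (L : Set (EuclideanSpace ℝ (Fin n)))) }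


lemma hd_fin {n d : ℕ} (L : AffineSubspace ℝ (EuclideanSpace ℝ (Fin n)))
    (hLne : (L : Set (EuclideanSpace ℝ (Fin n))).Nonempty)
    (hLd : Module.finrank ℝ L.direction = d)
    (x : EuclideanSpace ℝ (Fin n)) (r : ℝ) :
    μH[(d:ℝ)] ((L : Set (EuclideanSpace ℝ (Fin n))) ∩ closedBall x r) < ⊤ := by
  obtain ⟨p, hp⟩ := hLne
  set D := L.direction
  have hf : Isometry (fun z : EuclideanSpace ℝ (Fin n) => z - p) :=
    Isometry.of_dist_eq fun a b => dist_sub_right a b p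
  have himg : μH[(d:ℝ)] ((fun z => z - p) '' ((L : Set _) ∩ closedBall x r))
      = μH[(d:ℝ)] ((L : Set _) ∩ closedBall x r) :=
    hf.hausdorffMeasure_image (Or.inl (by positivity)) _
  rw [← himg]
  have hsub : (fun z => z - p) '' ((L : Set _) ∩ closedBall x r)
      ⊆ (D : Set _) ∩ closedBall (x - p) r := by
    rintro _ ⟨z, ⟨hzL, hzB⟩, rfl⟩
    refine ⟨?_, ?_⟩
    · exact AffineSubspace.vsub_mem_direction hzL hp
    · simpa [dist_sub_right] using hzB
  refine lt_of_le_of_lt (measure_mono hsub) ?_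
  set K : Set (EuclideanSpace ℝ (Fin n)) := (D : Set _) ∩ closedBall (x - p) r with hK
  have hDclosed : IsClosed (D : Set (EuclideanSpace ℝ (Fin n))) :=
    Submodule.closed_of_finiteDimensional D
  have hKcomp : IsCompact K := (isCompact_closedBall _ _).inter_left hDclosed
  have hKsub : K ⊆ (D : Set _) := inter_subset_left
  have hKimg : (Subtype.val '' (Subtype.val ⁻¹' K : Set D)) = K := by
    rw [image_preimage_eq_inter_range, Subtype.range_coe]
    exact inter_eq_self_of_subset_left hKsub
  have hval : Isometry (Subtype.val : D → EuclideanSpace ℝ (Fin n)) :=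
    isometry_subtype_coe
  have heq : μH[(d:ℝ)] K = μH[(d:ℝ)] (Subtype.val ⁻¹' K : Set D) := by
    conv_lhs => rw [← hKimg]
    exact hval.hausdorffMeasure_image (Or.inl (by positivity)) _
  rw [heq]
  have hpre : IsCompact (Subtype.val ⁻¹' K : Set D) := by
    rw [Topology.IsInducing.subtypeVal.isCompact_iff]
    exact hKimg.symm ▸ hKcomp
  have : ((d:ℕ):ℝ) = ((Module.finrank ℝ D : ℕ) : ℝ) := by rw [hLd]
  rw [this]
  exact hpre.measure_lt_top

lemma integral_bound' {n : ℕ} (hn : 0 < n) (σ : Measure (EuclideanSpace ℝ (Fin n)))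
    (x : EuclideanSpace ℝ (Fin n)) (r : ℝ) (hr : 0 < r) (hσ : σ (ball x r) ≠ ⊤)
    (φ : EuclideanSpace ℝ (Fin n) → ℝ) (hφ : LipschitzWith 1 φ)
    (hsupp : Function.support φ ⊆ ball x r) :
    |∫ z, φ z ∂σ| ≤ 3 * r * (σ (ball x r)).toReal := by
  set g : EuclideanSpace ℝ (Fin n) → ℝ := (ball x r).indicator (fun _ => 3 * r) with hg
  have hpt : ∀ z, |φ z| ≤ g z := by
    intro z
    by_cases hz : z ∈ ball x r
    · have hbound : |φ z| ≤ 3 * r := by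
        set w : EuclideanSpace ℝ (Fin n) :=
          x + (2 * r) • EuclideanSpace.single ⟨0, hn⟩ (1:ℝ) with hw
        have hdwx : dist w x = 2 * r := by
          rw [hw, dist_eq_norm, add_sub_cancel_left, norm_smul,
            EuclideanSpace.norm_single]
          simp [abs_of_pos hr, abs_of_pos (by linarith : (0:ℝ) < 2*r)]
        have hwout : w ∉ ball x r := by
          simp only [mem_ball, not_lt, hdwx]
          linarith
        have hφw : φ w = 0 := by
          by_contra h
          exact hwout (hsupp h)
        have := hφ.dist_le_mul z w
        rw [Real.dist_eq, hφw, sub_zero] at this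
        have hzw : dist z w ≤ dist z x + dist x w := dist_triangle z x w
        rw [dist_comm x w, hdwx] at hzw
        have hzx : dist z x < r := mem_ball.mp hz
        calc |φ z| ≤ 1 * dist z w := this
          _ ≤ dist z x + 2 * r := by rw [one_mul]; exact hzw
          _ ≤ 3 * r := by linarith
      simpa [hg, indicator_of_mem hz] using hbound
    · have hφz : φ z = 0 := Function.notMem_support.mp (fun h => hz (hsupp h))
      simp [hg, indicator_of_notMem hz, hφz]
  have hgint : Integrable g σ := by
    rw [hg, integrable_indicator_iff measurableSet_ball]
    exact integrableOn_const hσ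
  have hgval : ∫ z, g z ∂σ = (σ (ball x r)).toReal * (3 * r) := by
    rw [hg, integral_indicator_const _ measurableSet_ball]; simp [mul_comm, measureReal_def]
  by_cases hint : Integrable φ σ
  · have h1 : |∫ z, φ z ∂σ| ≤ ∫ z, |φ z| ∂σ := by
      simpa [Real.norm_eq_abs] using norm_integral_le_integral_norm (μ := σ) φ
    have h2 : ∫ z, |φ z| ∂σ ≤ ∫ z, g z ∂σ := integral_mono hint.abs hgint hpt
    rw [hgval, mul_comm] at h2
    linarith
  · rw [integral_undef hint]
    have : (0:ℝ) ≤ 3 * r * (σ (ball x r)).toReal := by positivity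
    simpa using this

/-- If `F_{B(x,r)}(μ, c·H^d|_L) < s·μ(B(y,s))` where `y ∈ B(x,r/2)` and `B(y,2s) ⊆ B(x,r)`,
then `L` meets `B(y,2s)`. -/
theorem statement3 (n d : ℕ) (hd : 1 ≤ d) (hdn : d ≤ n)
    (μ : Measure (EuclideanSpace ℝ (Fin n))) [IsLocallyFiniteMeasure μ]
    (x y : EuclideanSpace ℝ (Fin n)) (r s : ℝ) (hr : 0 < r) (hs : 0 < s)
    (hy : y ∈ ball x (r / 2)) (hsub : ball y (2 * s) ⊆ ball x r)
    (L : AffineSubspace ℝ (EuclideanSpace ℝ (Fin n))) (hL : IsAffineDPlane d L)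
    (c : ℝ) (hc : 0 ≤ c)
    (hF : FB (ball x r) μ
        ((ENNReal.ofReal c) • (μH[(d:ℝ)]).restrict (L : Set (EuclideanSpace ℝ (Fin n))))
      < s * (μ (ball y s)).toReal) :
    ((L : Set (EuclideanSpace ℝ (Fin n))) ∩ ball y (2 * s)).Nonempty := by
  by_contra hcon
  rw [Set.not_nonempty_iff_eq_empty] at hcon
  obtain ⟨hLne, hLd⟩ := hL
  have hn : 0 < n := le_trans hd hdn
  set ν : Measure (EuclideanSpace ℝ (Fin n)) :=
    (ENNReal.ofReal c) • (μH[(d:ℝ)]).restrict (L : Set (EuclideanSpace ℝ (Fin n))) with hν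
  have hLclosed : IsClosed (L : Set (EuclideanSpace ℝ (Fin n))) :=
    L.closed_of_finiteDimensional
  have hLmeas : MeasurableSet (L : Set (EuclideanSpace ℝ (Fin n))) := hLclosed.measurableSet
  have hfar : ∀ z ∈ (L : Set (EuclideanSpace ℝ (Fin n))), 2 * s ≤ dist z y := by
    intro z hz
    by_contra h
    push_neg at h
    exact absurd hcon (by
      rw [← Set.not_nonempty_iff_eq_empty]
      push_neg
      exact ⟨z, hz, mem_ball.mpr h⟩)
  set φ : EuclideanSpace ℝ (Fin n) → ℝ := fun z => max (2 * s - dist z y) 0 with hφ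
  have hφlip : LipschitzWith 1 φ := by
    have h1 : LipschitzWith 1 (fun z : EuclideanSpace ℝ (Fin n) => 2 * s - dist z y) := by
      have := (LipschitzWith.const (α := EuclideanSpace ℝ (Fin n)) (2 * s)).sub
        (LipschitzWith.dist_left y)
      simpa using this
    exact h1.max_const 0
  have hφsupp : Function.support φ ⊆ ball x r := by
    intro z hz
    apply hsub
    simp only [hφ, Function.mem_support] at hz
    have : 0 < 2 * s - dist z y := by
      by_contra h
      push_neg at h
      exact hz (max_eq_right h)
    exact mem_ball.mpr (by linarith)
  have hφν : ∫ z, φ z ∂ν = 0 := by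
    rw [hν, integral_smul_measure]
    have : ∫ z, φ z ∂((μH[(d:ℝ)]).restrict (L : Set (EuclideanSpace ℝ (Fin n)))) = 0 := by
      apply integral_eq_zero_of_ae
      filter_upwards [ae_restrict_mem hLmeas] with z hz
      have := hfar z hz
      simp only [hφ]
      exact max_eq_right (by linarith)
    rw [this, smul_zero]
  have hφcont : Continuous φ :=
    (continuous_const.sub (continuous_id.dist continuous_const)).max continuous_const
  have hφcs : HasCompactSupport φ := by
    apply HasCompactSupport.intro (isCompact_closedBall y (2 * s))
    intro z hz
    simp only [mem_closedBall, not_le] at hz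
    exact max_eq_right (by linarith)
  have hφint : Integrable φ μ := hφcont.integrable_of_hasCompactSupport hφcs
  have hlow : s * (μ (ball y s)).toReal ≤ ∫ z, φ z ∂μ := by
    have hind : Integrable ((ball y s).indicator (fun _ => s)) μ := by
      rw [integrable_indicator_iff measurableSet_ball]
      exact integrableOn_const measure_ball_lt_top.ne
    have hmono : ∀ z, (ball y s).indicator (fun _ => s) z ≤ φ z := by
      intro z
      by_cases hz : z ∈ ball y s
      · rw [indicator_of_mem hz]
        have : dist z y < s := mem_ball.mp hz
        exact le_max_of_le_left (by linarith)
      · rw [indicator_of_notMem hz]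
        exact le_max_right _ _
    calc s * (μ (ball y s)).toReal = ∫ z, (ball y s).indicator (fun _ => s) z ∂μ := by
          rw [integral_indicator_const _ measurableSet_ball]; simp [mul_comm, measureReal_def]
      _ ≤ ∫ z, φ z ∂μ := integral_mono hind hφint hmono
  -- ν is finite on ball x r
  have hνfin : ν (ball x r) ≠ ⊤ := by
    rw [hν]
    simp only [Measure.smul_apply, smul_eq_mul, Measure.restrict_apply measurableSet_ball]
    refine (ENNReal.mul_lt_top ENNReal.ofReal_lt_top ?_).ne
    refine lt_of_le_of_lt (measure_mono ?_) (hd_fin L hLne hLd x r)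
    intro z hz
    exact ⟨hz.2, mem_closedBall.mpr (le_of_lt (mem_ball.mp hz.1))⟩
  have hμfin : μ (ball x r) ≠ ⊤ := measure_ball_lt_top.ne
  -- the set defining FB is bounded above
  set S : Set ℝ := { t : ℝ | ∃ ψ : EuclideanSpace ℝ (Fin n) → ℝ,
    LipschitzWith 1 ψ ∧ Function.support ψ ⊆ ball x r ∧
    t = |(∫ z, ψ z ∂μ) - (∫ z, ψ z ∂ν)| } with hS
  have hbdd : BddAbove S := by
    refine ⟨3 * r * (μ (ball x r)).toReal + 3 * r * (ν (ball x r)).toReal, ?_⟩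
    rintro t ⟨ψ, hψlip, hψsupp, rfl⟩
    have h1 := integral_bound' hn μ x r hr hμfin ψ hψlip hψsupp
    have h2 := integral_bound' hn ν x r hr hνfin ψ hψlip hψsupp
    calc |(∫ z, ψ z ∂μ) - (∫ z, ψ z ∂ν)| ≤ |∫ z, ψ z ∂μ| + |∫ z, ψ z ∂ν| :=
          abs_sub _ _
      _ ≤ _ := add_le_add h1 h2
  have hmem : |(∫ z, φ z ∂μ) - (∫ z, φ z ∂ν)| ∈ S := ⟨φ, hφlip, hφsupp, rfl⟩
  have hle : |(∫ z, φ z ∂μ) - (∫ z, φ z ∂ν)| ≤ FB (ball x r) μ ν := le_csSup hbdd hmem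
  have hval : |(∫ z, φ z ∂μ) - (∫ z, φ z ∂ν)| = ∫ z, φ z ∂μ := by
    rw [hφν, sub_zero]
    exact abs_of_nonneg (integral_nonneg fun z => le_max_right _ _)
  rw [hval] at hle
  have : s * (μ (ball y s)).toReal ≤ FB (ball x r) μ ν := le_trans hlow hle
  rw [hν] at this
  exact absurd hF (not_lt.mpr this)


end
end

section
/- Let μ be a Radon measure on ℝⁿ, x ∈ ℝⁿ, r > 0, let L be an affine d-plane, c ≥ 0, and set ℒ := c·H^d|_L. If F_{B(x,r)}(μ,ℒ) < (r/8)·μ(B(x,r/8)), then there is a constant C = C(n,d) > 0 such that C⁻¹·Θ_μ^d(x,r/2) ≤ c ≤ C·Θ_μ^d(x,r). -/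
open MeasureTheory Metric Set
open scoped ENNReal NNReal

noncomputable section

/-- The density ratio `Θ_μ^d(x,r) = μ(B(x,r))/r^d`. -/
def densityRatio {n : ℕ} (d : ℕ) (μ : Measure (EuclideanSpace ℝ (Fin n)))
    (x : EuclideanSpace ℝ (Fin n)) (r : ℝ) : ℝ :=
  (μ (ball x r)).toReal / r ^ d

lemma nontrivialE {n : ℕ} (hn : 0 < n) : Nontrivial (EuclideanSpace ℝ (Fin n)) := by
  refine ⟨⟨0, EuclideanSpace.single ⟨0, hn⟩ (1:ℝ), fun h => ?_⟩⟩
  have := congrArg (fun v => v ⟨0, hn⟩) h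
  simp [EuclideanSpace.single_apply] at this

lemma support_bound {n : ℕ} (hn : 0 < n) {z : EuclideanSpace ℝ (Fin n)} {s : ℝ} (hs : 0 < s)
    {φ : EuclideanSpace ℝ (Fin n) → ℝ} (hφ : LipschitzWith 1 φ)
    (hsupp : Function.support φ ⊆ ball z s) (y : EuclideanSpace ℝ (Fin n)) : |φ y| ≤ 2 * s := by
  haveI := nontrivialE hn
  by_cases hy : y ∈ ball z s
  · obtain ⟨u, hu⟩ := exists_norm_eq (EuclideanSpace ℝ (Fin n)) hs.le
    have hw : z + u ∉ ball z s := by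
      simp [mem_ball, dist_eq_norm, add_sub_cancel_left, hu]
    have hφw : φ (z + u) = 0 := by
      by_contra h; exact hw (hsupp h)
    have := hφ.dist_le_mul y (z + u)
    rw [Real.dist_eq, hφw, sub_zero] at this
    have hdy : dist y (z + u) ≤ dist y z + dist z (z + u) := dist_triangle _ _ _
    have h1 : dist y z < s := mem_ball.1 hy
    have h2 : dist z (z + u) = s := by
      simp [dist_eq_norm, hu]
    calc |φ y| ≤ 1 * dist y (z + u) := this
      _ ≤ dist y z + s := by rw [one_mul]; linarith [hdy, h2.le, h2]
      _ ≤ 2 * s := by linarith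
  · have : φ y = 0 := by
      by_contra h; exact hy (hsupp h)
    rw [this]; simp; linarith

lemma integrable_of_support {n : ℕ} (hn : 0 < n) {z : EuclideanSpace ℝ (Fin n)} {s : ℝ}
    (hs : 0 < s) {φ : EuclideanSpace ℝ (Fin n) → ℝ} (hφ : LipschitzWith 1 φ)
    (hsupp : Function.support φ ⊆ ball z s) (σ : Measure (EuclideanSpace ℝ (Fin n)))
    (hfin : σ (ball z s) ≠ ⊤) : Integrable φ σ := by
  refine (integrableOn_iff_integrable_of_support_subset hsupp).1 ?_
  refine Measure.integrableOn_of_bounded hfin hφ.continuous.aestronglyMeasurable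
    (M := 2 * s) (ae_of_all _ fun y => ?_)
  simpa [Real.norm_eq_abs] using support_bound hn hs hφ hsupp y

lemma abs_integral_le {n : ℕ} (hn : 0 < n) {z : EuclideanSpace ℝ (Fin n)} {s : ℝ}
    (hs : 0 < s) {φ : EuclideanSpace ℝ (Fin n) → ℝ} (hφ : LipschitzWith 1 φ)
    (hsupp : Function.support φ ⊆ ball z s) (σ : Measure (EuclideanSpace ℝ (Fin n)))
    (hfin : σ (ball z s) ≠ ⊤) : |∫ y, φ y ∂σ| ≤ 2 * s * (σ (ball z s)).toReal := by
  rw [← setIntegral_eq_integral_of_forall_compl_eq_zero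
    (fun y hy => Function.notMem_support.1 fun h => hy (hsupp h)) (s := ball z s)]
  simpa [Real.norm_eq_abs, Measure.real] using
    norm_setIntegral_le_of_norm_le_const hfin.lt_top
      (fun y _ => by simpa [Real.norm_eq_abs] using support_bound hn hs hφ hsupp y)
      (f := φ) (μ := σ)

lemma infDist_ball_lower {n : ℕ} (hn : 0 < n) {z y : EuclideanSpace ℝ (Fin n)} {s : ℝ}
    (hs : 0 < s) (hy : y ∈ ball z (s/2)) : s/2 ≤ infDist y (ball z s)ᶜ := by
  haveI := nontrivialE hn
  obtain ⟨u, hu⟩ := exists_norm_eq (EuclideanSpace ℝ (Fin n)) hs.le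
  have hne : ((ball z s)ᶜ).Nonempty := by
    refine ⟨z + u, ?_⟩
    simp [mem_ball, dist_eq_norm, add_sub_cancel_left, hu]
  by_contra h
  push_neg at h
  obtain ⟨w, hw, hwd⟩ := (infDist_lt_iff hne).1 h
  have h1 : dist y z < s/2 := mem_ball.1 hy
  have : dist w z < s := by
    calc dist w z ≤ dist w y + dist y z := dist_triangle _ _ _
      _ < s/2 + s/2 := by rw [dist_comm w y]; exact add_lt_add hwd h1
      _ = s := by ring
  exact hw (mem_ball.2 this)

lemma integral_infDist_ge {n : ℕ} (hn : 0 < n) (σ : Measure (EuclideanSpace ℝ (Fin n)))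
    {z : EuclideanSpace ℝ (Fin n)} {s : ℝ} (hs : 0 < s) (hfin : σ (ball z s) ≠ ⊤) :
    s/2 * (σ (ball z (s/2))).toReal ≤ ∫ y, infDist y (ball z s)ᶜ ∂σ := by
  have hφ : LipschitzWith 1 (fun y => infDist y (ball z s)ᶜ) := lipschitz_infDist_pt _
  have hsupp : Function.support (fun y => infDist y (ball z s)ᶜ) ⊆ ball z s := by
    intro y hy
    by_contra h
    exact hy (infDist_zero_of_mem (mem_compl h))
  have hint : Integrable (fun y => infDist y (ball z s)ᶜ) σ :=
    integrable_of_support hn hs hφ hsupp σ hfin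
  have hfin2 : σ (ball z (s/2)) ≠ ⊤ :=
    ((measure_mono (ball_subset_ball (by linarith))).trans_lt hfin.lt_top).ne
  calc s/2 * (σ (ball z (s/2))).toReal
      ≤ ∫ y in ball z (s/2), infDist y (ball z s)ᶜ ∂σ :=
        setIntegral_ge_of_const_le_real measurableSet_ball hfin2
          (fun y hy => infDist_ball_lower hn hs hy) hint.integrableOn
    _ ≤ ∫ y, infDist y (ball z s)ᶜ ∂σ :=
        setIntegral_le_integral hint (ae_of_all _ fun y => infDist_nonneg)


lemma euclidean_ball_bounds (d : ℕ) (hd : 1 ≤ d) :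
    ∃ k K : ℝ, 0 < k ∧ 0 < K ∧ ∀ s : ℝ, 0 < s →
      ENNReal.ofReal (k * s ^ d) ≤ μH[(d:ℝ)] (ball (0 : EuclideanSpace ℝ (Fin d)) s) ∧
      μH[(d:ℝ)] (ball (0 : EuclideanSpace ℝ (Fin d)) s) ≤ ENNReal.ofReal (K * s ^ d) := by
  set a : ℝ≥0 := (Fintype.card (Fin d) : ℝ≥0) ^ ((1/(2:ℝ≥0∞)).toReal) with ha
  have hcard : Fintype.card (Fin d) = d := Fintype.card_fin d
  have ha0 : 0 < a := by
    apply NNReal.rpow_pos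
    rw [hcard]
    exact_mod_cast Nat.pos_of_ne_zero (by omega)
  have ha0' : (0:ℝ) < (a:ℝ) := ha0
  have hlip : LipschitzWith 1 ⇑(WithLp.equiv 2 (Fin d → ℝ)) := PiLp.lipschitzWith_ofLp 2 _
  have hanti : AntilipschitzWith a ⇑(WithLp.equiv 2 (Fin d → ℝ)) :=
    PiLp.antilipschitzWith_ofLp 2 _
  have hμpi : (μH[(d:ℝ)] : Measure (Fin d → ℝ)) = volume := by
    have := hausdorffMeasure_pi_real (ι := Fin d)
    rwa [hcard] at this
  have hdnn : (0:ℝ) ≤ (d:ℝ) := Nat.cast_nonneg d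
  refine ⟨(2/(a:ℝ))^d, (a:ℝ)^d * 2^d, by positivity, by positivity, fun s hs => ?_⟩
  constructor
  · -- lower bound
    have h1 : ball (0 : Fin d → ℝ) (s/(a:ℝ)) ⊆
        ⇑(WithLp.equiv 2 (Fin d → ℝ)) '' (ball (0 : EuclideanSpace ℝ (Fin d)) s) := by
      intro v hv
      refine ⟨(WithLp.equiv 2 (Fin d → ℝ)).symm v, ?_, by simp⟩
      rw [mem_ball] at hv ⊢
      have h2 : dist ((WithLp.equiv 2 (Fin d → ℝ)).symm v) 0 ≤ (a:ℝ) * dist v 0 := by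
        have := hanti.le_mul_dist ((WithLp.equiv 2 (Fin d → ℝ)).symm v) 0
        simpa using this
      calc dist ((WithLp.equiv 2 (Fin d → ℝ)).symm v) 0 ≤ (a:ℝ) * dist v 0 := h2
        _ < (a:ℝ) * (s/(a:ℝ)) := by
            exact mul_lt_mul_of_pos_left hv ha0'
        _ = s := by field_simp
    have hvol : ENNReal.ofReal ((2/(a:ℝ))^d * s^d) = volume (ball (0 : Fin d → ℝ) (s/(a:ℝ))) := by
      rw [Real.volume_pi_ball _ (by positivity), hcard]
      congr 1
      rw [show (2*(s/(a:ℝ))) = (2/(a:ℝ))*s by ring, mul_pow]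
    calc ENNReal.ofReal ((2/(a:ℝ))^d * s^d)
        = volume (ball (0 : Fin d → ℝ) (s/(a:ℝ))) := hvol
      _ ≤ volume (⇑(WithLp.equiv 2 (Fin d → ℝ)) '' (ball (0 : EuclideanSpace ℝ (Fin d)) s)) :=
          measure_mono h1
      _ = μH[(d:ℝ)] (⇑(WithLp.equiv 2 (Fin d → ℝ)) '' (ball (0 : EuclideanSpace ℝ (Fin d)) s)) := by
          rw [hμpi]
      _ ≤ (1:ℝ≥0∞)^(d:ℝ) * μH[(d:ℝ)] (ball (0 : EuclideanSpace ℝ (Fin d)) s) := by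
          simpa using hlip.hausdorffMeasure_image_le hdnn (ball (0 : EuclideanSpace ℝ (Fin d)) s)
      _ = μH[(d:ℝ)] (ball (0 : EuclideanSpace ℝ (Fin d)) s) := by
          rw [ENNReal.one_rpow, one_mul]
  · -- upper bound
    have h2 : ⇑(WithLp.equiv 2 (Fin d → ℝ)) '' (ball (0 : EuclideanSpace ℝ (Fin d)) s) ⊆
        ball (0 : Fin d → ℝ) s := by
      rintro _ ⟨u, hu, rfl⟩
      rw [mem_ball] at hu ⊢
      have := hlip.dist_le_mul u 0
      simpa using lt_of_le_of_lt (by simpa using this) hu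
    have hconst : ((a : ℝ≥0∞))^(d:ℝ) = ENNReal.ofReal ((a:ℝ)^d) := by
      rw [ENNReal.rpow_natCast, ← ENNReal.coe_pow, ← ENNReal.ofReal_coe_nnreal, NNReal.coe_pow]
    calc μH[(d:ℝ)] (ball (0 : EuclideanSpace ℝ (Fin d)) s)
        ≤ (a : ℝ≥0∞)^(d:ℝ) *
            μH[(d:ℝ)] (⇑(WithLp.equiv 2 (Fin d → ℝ)) '' (ball (0 : EuclideanSpace ℝ (Fin d)) s)) :=
          hanti.le_hausdorffMeasure_image hdnn _
      _ ≤ (a : ℝ≥0∞)^(d:ℝ) * volume (ball (0 : Fin d → ℝ) s) := by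
          rw [hμpi]
          exact mul_le_mul_right (measure_mono h2) _
      _ = ENNReal.ofReal ((a:ℝ)^d * 2^d * s^d) := by
          rw [Real.volume_pi_ball _ hs, hcard, hconst, ← ENNReal.ofReal_mul (by positivity)]
          congr 1
          rw [mul_pow]
          ring

lemma plane_measure {n d : ℕ} {L : AffineSubspace ℝ (EuclideanSpace ℝ (Fin n))}
    (hL : Module.finrank ℝ L.direction = d) {p : EuclideanSpace ℝ (Fin n)} (hp : p ∈ L)
    (s : ℝ) :
    μH[(d:ℝ)] (ball p s ∩ (L : Set (EuclideanSpace ℝ (Fin n)))) =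
      μH[(d:ℝ)] (ball (0 : EuclideanSpace ℝ (Fin d)) s) := by
  let b : OrthonormalBasis (Fin d) ℝ L.direction :=
    (stdOrthonormalBasis ℝ L.direction).reindex (finCongr hL)
  let f : EuclideanSpace ℝ (Fin d) → EuclideanSpace ℝ (Fin n) :=
    fun v => ((b.repr.symm v : L.direction) : EuclideanSpace ℝ (Fin n)) + p
  have hf : Isometry f := by
    refine Isometry.of_dist_eq fun u v => ?_
    show dist (((b.repr.symm u : L.direction) : EuclideanSpace ℝ (Fin n)) + p)
        (((b.repr.symm v : L.direction) : EuclideanSpace ℝ (Fin n)) + p) = dist u v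
    rw [dist_add_right]
    have : dist ((b.repr.symm u : L.direction) : EuclideanSpace ℝ (Fin n))
        ((b.repr.symm v : L.direction) : EuclideanSpace ℝ (Fin n))
        = dist (b.repr.symm u) (b.repr.symm v) := rfl
    rw [this, b.repr.symm.dist_map]
  have him : f '' (ball (0 : EuclideanSpace ℝ (Fin d)) s)
      = ball p s ∩ (L : Set (EuclideanSpace ℝ (Fin n))) := by
    ext z
    constructor
    · rintro ⟨v, hv, rfl⟩
      rw [mem_ball] at hv
      constructor
      · rw [mem_ball]
        show dist (((b.repr.symm v : L.direction) : EuclideanSpace ℝ (Fin n)) + p) p < s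
        rw [dist_add_self_left]
        have : ‖((b.repr.symm v : L.direction) : EuclideanSpace ℝ (Fin n))‖
            = ‖b.repr.symm v‖ := rfl
        rw [this, b.repr.symm.norm_map]
        simpa [dist_eq_norm] using hv
      · have hmem : ((b.repr.symm v : L.direction) : EuclideanSpace ℝ (Fin n)) ∈ L.direction :=
          (b.repr.symm v).2
        have := AffineSubspace.vadd_mem_of_mem_direction hmem hp
        simpa [vadd_eq_add] using this
    · rintro ⟨hz1, hz2⟩
      have hzd : z - p ∈ L.direction := by
        have := AffineSubspace.vsub_mem_direction hz2 hp
        simpa [vsub_eq_sub] using this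
      refine ⟨b.repr ⟨z - p, hzd⟩, ?_, ?_⟩
      · rw [mem_ball]
        have h1 : dist (b.repr ⟨z - p, hzd⟩) 0 = ‖b.repr ⟨z - p, hzd⟩‖ := by
          simp [dist_eq_norm]
        rw [h1, b.repr.norm_map]
        have : ‖(⟨z - p, hzd⟩ : L.direction)‖ = ‖z - p‖ := rfl
        rw [this, ← dist_eq_norm]
        exact mem_ball.1 hz1
      · show ((b.repr.symm (b.repr ⟨z - p, hzd⟩) : L.direction) : EuclideanSpace ℝ (Fin n)) + p = z
        rw [b.repr.symm_apply_apply]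
        simp
  rw [← him, hf.hausdorffMeasure_image (Or.inl (Nat.cast_nonneg d))]


lemma le_FB {n : ℕ} (hn : 0 < n) {x : EuclideanSpace ℝ (Fin n)} {r : ℝ} (hr : 0 < r)
    (σ ν : Measure (EuclideanSpace ℝ (Fin n)))
    (hσ : σ (ball x r) ≠ ⊤) (hν : ν (ball x r) ≠ ⊤)
    {φ : EuclideanSpace ℝ (Fin n) → ℝ} (hφ : LipschitzWith 1 φ)
    (hsupp : Function.support φ ⊆ ball x r) :
    |(∫ y, φ y ∂σ) - (∫ y, φ y ∂ν)| ≤ FB (ball x r) σ ν := by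
  apply le_csSup
  · refine ⟨2*r*(σ (ball x r)).toReal + 2*r*(ν (ball x r)).toReal, ?_⟩
    rintro t ⟨ψ, hψ, hψs, rfl⟩
    have h1 := abs_integral_le hn hr hψ hψs σ hσ
    have h2 := abs_integral_le hn hr hψ hψs ν hν
    calc |(∫ y, ψ y ∂σ) - (∫ y, ψ y ∂ν)| ≤ |∫ y, ψ y ∂σ| + |∫ y, ψ y ∂ν| := by
          rw [sub_eq_add_neg]
          exact (abs_add_le _ _).trans (by rw [abs_neg])
      _ ≤ 2*r*(σ (ball x r)).toReal + 2*r*(ν (ball x r)).toReal := add_le_add h1 h2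
  · exact ⟨φ, hφ, hsupp, rfl⟩

lemma FB_nonneg {n : ℕ} (hn : 0 < n) {x : EuclideanSpace ℝ (Fin n)} {r : ℝ} (hr : 0 < r)
    (σ ν : Measure (EuclideanSpace ℝ (Fin n)))
    (hσ : σ (ball x r) ≠ ⊤) (hν : ν (ball x r) ≠ ⊤) :
    0 ≤ FB (ball x r) σ ν := by
  have := le_FB hn hr σ ν hσ hν (φ := fun _ => (0:ℝ))
    ((LipschitzWith.const 0).weaken zero_le_one) (by simp [Function.support])
  simpa using this


set_option maxHeartbeats 2000000 in
/-- If `F_{B(x,r)}(μ, c·H^d|_L) < (r/8)·μ(B(x,r/8))`, then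
`Θ_μ^d(x,r/2) ≲ c ≲ Θ_μ^d(x,r)` with a constant depending only on `n` and `d`. -/
theorem statement4 (n d : ℕ) (hd : 1 ≤ d) (hdn : d ≤ n) :
    ∃ C : ℝ, 0 < C ∧
      ∀ (μ : Measure (EuclideanSpace ℝ (Fin n))) [IsLocallyFiniteMeasure μ]
        (x : EuclideanSpace ℝ (Fin n)) (r : ℝ), 0 < r →
        ∀ (L : AffineSubspace ℝ (EuclideanSpace ℝ (Fin n))), IsAffineDPlane d L →
        ∀ c : ℝ, 0 ≤ c →
        FB (ball x r) μ
            ((ENNReal.ofReal c) • (μH[(d:ℝ)]).restrict (L : Set (EuclideanSpace ℝ (Fin n))))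
          < (r / 8) * (μ (ball x (r / 8))).toReal →
        C⁻¹ * densityRatio d μ x (r / 2) ≤ c ∧ c ≤ C * densityRatio d μ x r := by
  obtain ⟨k, K, hk, hK, hball⟩ := euclidean_ball_bounds d hd
  have h4d : (0:ℝ) < 4^d := by positivity
  have h2d : (0:ℝ) < 2^d := by positivity
  set C₁ : ℝ := (16/3) * K * 4^d with hC₁
  set C₂ : ℝ := (9/2) * 4^d / k with hC₂
  have hC₁pos : 0 < C₁ := by positivity
  have hC₂pos : 0 < C₂ := by positivity
  refine ⟨max C₁ C₂, lt_of_lt_of_le hC₁pos (le_max_left _ _), ?_⟩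
  intro μ _ x r hr L hL c hc hFB
  have hn : 0 < n := le_trans hd hdn
  have hrd : (0:ℝ) < r^d := by positivity
  have hμfin : ∀ (z : EuclideanSpace ℝ (Fin n)) (t : ℝ), μ (ball z t) ≠ ⊤ :=
    fun z t => measure_ball_lt_top.ne
  set ν : Measure (EuclideanSpace ℝ (Fin n)) :=
    (ENNReal.ofReal c) • (μH[(d:ℝ)]).restrict (L : Set (EuclideanSpace ℝ (Fin n))) with hνdef
  have hνball : ∀ (z : EuclideanSpace ℝ (Fin n)) (t : ℝ),
      ν (ball z t) = ENNReal.ofReal c * μH[(d:ℝ)] (ball z t ∩ L) := by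
    intro z t
    rw [hνdef, Measure.smul_apply, Measure.restrict_apply measurableSet_ball, smul_eq_mul]
  have hplane_le : ∀ (z : EuclideanSpace ℝ (Fin n)) (t : ℝ), 0 < t →
      μH[(d:ℝ)] (ball z t ∩ L) ≤ ENNReal.ofReal (K * (2*t)^d) := by
    intro z t ht
    rcases Set.eq_empty_or_nonempty (ball z t ∩ (L : Set (EuclideanSpace ℝ (Fin n)))) with
      he | ⟨q, hq1, hq2⟩
    · rw [he, measure_empty]; exact zero_le
    · have hsub : ball z t ∩ (L : Set (EuclideanSpace ℝ (Fin n))) ⊆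
          ball q (2*t) ∩ (L : Set (EuclideanSpace ℝ (Fin n))) := by
        rintro w ⟨hw1, hw2⟩
        refine ⟨mem_ball.2 ?_, hw2⟩
        have h1 : dist w z < t := mem_ball.1 hw1
        have h2 : dist q z < t := mem_ball.1 hq1
        calc dist w q ≤ dist w z + dist z q := dist_triangle _ _ _
          _ < t + t := add_lt_add h1 (by rwa [dist_comm])
          _ = 2*t := by ring
      calc μH[(d:ℝ)] (ball z t ∩ (L : Set (EuclideanSpace ℝ (Fin n))))
          ≤ μH[(d:ℝ)] (ball q (2*t) ∩ (L : Set (EuclideanSpace ℝ (Fin n)))) := measure_mono hsub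
        _ = μH[(d:ℝ)] (ball (0 : EuclideanSpace ℝ (Fin d)) (2*t)) := plane_measure hL.2 hq2 _
        _ ≤ ENNReal.ofReal (K * (2*t)^d) := (hball (2*t) (by positivity)).2
  have hνfin : ∀ (z : EuclideanSpace ℝ (Fin n)) (t : ℝ), 0 < t → ν (ball z t) ≠ ⊤ := by
    intro z t ht
    rw [hνball]
    exact ENNReal.mul_ne_top ENNReal.ofReal_ne_top
      ((hplane_le z t ht).trans_lt ENNReal.ofReal_lt_top).ne
  have hFBge : ∀ φ : EuclideanSpace ℝ (Fin n) → ℝ, LipschitzWith 1 φ →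
      Function.support φ ⊆ ball x r →
      |(∫ y, φ y ∂μ) - (∫ y, φ y ∂ν)| < (r/8) * (μ (ball x (r/8))).toReal :=
    fun φ h1 h2 => lt_of_le_of_lt (le_FB hn hr μ ν (hμfin x r) (hνfin x r hr) h1 h2) hFB
  have hRHSpos : 0 < (r/8) * (μ (ball x (r/8))).toReal :=
    lt_of_le_of_lt (FB_nonneg hn hr μ ν (hμfin x r) (hνfin x r hr)) hFB
  have hm8pos : 0 < (μ (ball x (r/8))).toReal := by
    by_contra h
    push_neg at h
    nlinarith
  -- Step 1 : find a point p of L close to x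
  have hφ₁lip : LipschitzWith 1 (fun y => infDist y (ball x (r/4))ᶜ) := lipschitz_infDist_pt _
  have hsupp₁ : Function.support (fun y => infDist y (ball x (r/4))ᶜ) ⊆ ball x (r/4) := by
    intro y hy
    by_contra h
    exact hy (infDist_zero_of_mem (mem_compl h))
  have hsupp₁' : Function.support (fun y => infDist y (ball x (r/4))ᶜ) ⊆ ball x r :=
    hsupp₁.trans (ball_subset_ball (by linarith))
  have hint1 : (r/8) * (μ (ball x (r/8))).toReal ≤ ∫ y, infDist y (ball x (r/4))ᶜ ∂μ := by
    have := integral_infDist_ge hn μ (z := x) (s := r/4) (by positivity) (hμfin x (r/4))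
    rw [show r/4/2 = r/8 by ring] at this
    exact this
  have hd1 := hFBge _ hφ₁lip hsupp₁'
  have hν1pos : 0 < ∫ y, infDist y (ball x (r/4))ᶜ ∂ν := by
    have h := abs_lt.1 hd1
    linarith [h.1, hint1]
  have hνne : ν (ball x (r/4)) ≠ 0 := by
    intro h0
    have h := abs_integral_le hn (by positivity : (0:ℝ) < r/4) hφ₁lip hsupp₁ ν
      (hνfin x (r/4) (by positivity))
    rw [h0] at h
    simp only [ENNReal.toReal_zero, mul_zero] at h
    have := abs_nonneg (∫ y, infDist y (ball x (r/4))ᶜ ∂ν)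
    have h2 := (abs_le.1 h).2
    linarith
  have hLne : (ball x (r/4) ∩ (L : Set (EuclideanSpace ℝ (Fin n)))).Nonempty := by
    rcases Set.eq_empty_or_nonempty (ball x (r/4) ∩ (L : Set (EuclideanSpace ℝ (Fin n)))) with
      he | h
    · exfalso
      apply hνne
      rw [hνball, he, measure_empty, mul_zero]
    · exact h
  obtain ⟨p, hp1, hp2⟩ := hLne
  have hpx : dist p x < r/4 := mem_ball.1 hp1
  have hplane_ge : ∀ t : ℝ, 0 < t → ENNReal.ofReal (c * (k * t^d)) ≤ ν (ball p t) := by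
    intro t ht
    rw [hνball, ENNReal.ofReal_mul hc]
    exact mul_le_mul_right (((hball t ht).1).trans_eq (plane_measure hL.2 hp2 t).symm) _
  -- the measures of balls we use
  set m8 : ℝ := (μ (ball x (r/8))).toReal with hm8
  set m2 : ℝ := (μ (ball x (r/2))).toReal with hm2
  set m1 : ℝ := (μ (ball x r)).toReal with hm1
  have hm8le1 : m8 ≤ m1 := ENNReal.toReal_mono (hμfin x r) (measure_mono (ball_subset_ball (by linarith)))
  have hm8le2 : m8 ≤ m2 := ENNReal.toReal_mono (hμfin x (r/2)) (measure_mono (ball_subset_ball (by linarith)))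
  have hm2nn : 0 ≤ m2 := ENNReal.toReal_nonneg
  have hm1nn : 0 ≤ m1 := ENNReal.toReal_nonneg
  constructor
  · -- lower bound: C⁻¹ Θ(r/2) ≤ c
    have hφ₃lip : LipschitzWith 1 (fun y => infDist y (ball x r)ᶜ) := lipschitz_infDist_pt _
    have hsupp₃ : Function.support (fun y => infDist y (ball x r)ᶜ) ⊆ ball x r := by
      intro y hy
      by_contra h
      exact hy (infDist_zero_of_mem (mem_compl h))
    have h3a : (r/2) * m2 ≤ ∫ y, infDist y (ball x r)ᶜ ∂μ :=
      integral_infDist_ge hn μ hr (hμfin x r)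
    have h3b : |∫ y, infDist y (ball x r)ᶜ ∂ν| ≤ 2*r*(ν (ball x r)).toReal :=
      abs_integral_le hn hr hφ₃lip hsupp₃ ν (hνfin x r hr)
    have h3c : (ν (ball x r)).toReal ≤ c * (K*(2*r)^d) := by
      have h1 : ν (ball x r) ≤ ENNReal.ofReal (c * (K*(2*r)^d)) := by
        rw [hνball, ENNReal.ofReal_mul hc]
        exact mul_le_mul_right (hplane_le x r hr) _
      exact ENNReal.toReal_le_of_le_ofReal (by positivity) h1
    have h3d := hFBge _ hφ₃lip hsupp₃
    have hνnn : 0 ≤ (ν (ball x r)).toReal := ENNReal.toReal_nonneg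
    -- (r/2) m2 ≤ 2r c K (2r)^d + (r/8) m2
    have hcomb : (r/2) * m2 ≤ 2*r*(c * (K*(2*r)^d)) + (r/8) * m2 := by
      have habs := (abs_lt.1 h3d).2
      have habs2 := (abs_le.1 h3b).2
      have habs3 := (abs_le.1 h3b).1
      nlinarith [mul_le_mul_of_nonneg_left h3c (by linarith : (0:ℝ) ≤ 2*r)]
    have hpow : (2*r)^d = 2^d * r^d := by rw [mul_pow]
    have hkey : m2 * 2^d / r^d ≤ c * C₁ := by
      rw [div_le_iff₀ hrd]
      have e1 : (3/8 * m2) * r ≤ (2 * (c * (K * (2^d * r^d)))) * r := by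
        rw [hpow] at hcomb; linarith
      have e2 : 3/8 * m2 ≤ 2 * (c * (K * (2^d * r^d))) := le_of_mul_le_mul_right e1 hr
      have h2d2 : (2:ℝ)^d * 2^d = 4^d := by rw [← mul_pow]; norm_num
      have e3 := mul_le_mul_of_nonneg_right e2 h2d.le
      rw [hC₁]
      calc m2 * 2^d = (8/3) * ((3/8*m2) * 2^d) := by ring
        _ ≤ (8/3) * ((2*(c*(K*(2^d*r^d)))) * 2^d) := by linarith [e3]
        _ = c * ((16/3)*K*4^d) * r^d := by rw [← h2d2]; ring
    have hdens : densityRatio d μ x (r/2) = m2 * 2^d / r^d := by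
      rw [densityRatio, hm2, div_pow]
      field_simp
    rw [hdens]
    have hmaxpos : 0 < max C₁ C₂ := lt_of_lt_of_le hC₁pos (le_max_left _ _)
    have hdnn : 0 ≤ m2 * 2^d / r^d := by positivity
    calc (max C₁ C₂)⁻¹ * (m2 * 2^d / r^d) ≤ C₁⁻¹ * (m2 * 2^d / r^d) := by
          apply mul_le_mul_of_nonneg_right _ hdnn
          exact inv_anti₀ hC₁pos (le_max_left _ _)
      _ ≤ c := by
          rw [inv_mul_le_iff₀ hC₁pos]
          linarith [hkey]
  · -- upper bound: c ≤ C Θ(r)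
    have hφ₂lip : LipschitzWith 1 (fun y => infDist y (ball p (r/2))ᶜ) := lipschitz_infDist_pt _
    have hsupp₂ : Function.support (fun y => infDist y (ball p (r/2))ᶜ) ⊆ ball p (r/2) := by
      intro y hy
      by_contra h
      exact hy (infDist_zero_of_mem (mem_compl h))
    have hballpx : ball p (r/2) ⊆ ball x r := by
      intro w hw
      rw [mem_ball] at hw ⊢
      calc dist w x ≤ dist w p + dist p x := dist_triangle _ _ _
        _ < r/2 + r/4 := add_lt_add hw hpx
        _ ≤ r := by linarith
    have hsupp₂' : Function.support (fun y => infDist y (ball p (r/2))ᶜ) ⊆ ball x r :=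
      hsupp₂.trans hballpx
    have h2a : (r/4) * (ν (ball p (r/4))).toReal ≤ ∫ y, infDist y (ball p (r/2))ᶜ ∂ν := by
      have := integral_infDist_ge hn ν (z := p) (s := r/2) (by positivity) (hνfin p (r/2) (by positivity))
      rw [show r/2/2 = r/4 by ring] at this
      exact this
    have h2b : c * (k*(r/4)^d) ≤ (ν (ball p (r/4))).toReal := by
      have h1 := hplane_ge (r/4) (by positivity)
      have h2 := ENNReal.toReal_mono (hνfin p (r/4) (by positivity)) h1
      rwa [ENNReal.toReal_ofReal (by positivity)] at h2
    have h2c : |∫ y, infDist y (ball p (r/2))ᶜ ∂μ| ≤ 2*(r/2) * (μ (ball p (r/2))).toReal :=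
      abs_integral_le hn (by positivity) hφ₂lip hsupp₂ μ (hμfin p (r/2))
    have hμmono : (μ (ball p (r/2))).toReal ≤ m1 :=
      ENNReal.toReal_mono (hμfin x r) (measure_mono hballpx)
    have h2d' := hFBge _ hφ₂lip hsupp₂'
    have hcomb : (r/4) * (c * (k*(r/4)^d)) ≤ r * m1 + (r/8) * m1 := by
      have hμle : ∫ y, infDist y (ball p (r/2))ᶜ ∂μ ≤ r * m1 := by
        have h1 := le_abs_self (∫ y, infDist y (ball p (r/2))ᶜ ∂μ)
        have h2 := mul_le_mul_of_nonneg_left hμmono (by positivity : (0:ℝ) ≤ 2*(r/2))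
        linarith [(abs_le.1 h2c).2]
      have hstep := mul_le_mul_of_nonneg_left h2b (by positivity : (0:ℝ) ≤ r/4)
      have habs := (abs_lt.1 h2d').1
      have hm8r := mul_le_mul_of_nonneg_left hm8le1 (by positivity : (0:ℝ) ≤ r/8)
      linarith [h2a, hstep, habs, hμle, hm8r]
    have hkey : c ≤ C₂ * (m1 / r^d) := by
      rw [div_pow] at hcomb
      rw [hC₂]
      have hckr : c * k * r^d ≤ (9/2) * 4^d * m1 := by
        have h44 : (0:ℝ) < (4:ℝ)^d * 4 := by positivity
        have hthis := mul_le_mul_of_nonneg_left hcomb (le_of_lt h44)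
        have hr' : r ≠ 0 := ne_of_gt hr
        have hexp : (4:ℝ)^d * 4 * (r/4 * (c * (k * (r^d/4^d)))) = c * k * r^d * r := by
          field_simp
        rw [hexp] at hthis
        have e1 : (c*k*r^d)*r ≤ ((9/2)*4^d*m1)*r := by nlinarith [hthis]
        exact le_of_mul_le_mul_right e1 hr
      have hgoal : c ≤ ((9/2)*4^d*m1)/(k*r^d) := by
        rw [le_div_iff₀ (by positivity : (0:ℝ) < k*r^d)]
        calc c * (k*r^d) = c*k*r^d := by ring
          _ ≤ (9/2)*4^d*m1 := hckr
      calc c ≤ ((9/2)*4^d*m1)/(k*r^d) := hgoal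
        _ = (9/2)*4^d/k*(m1/r^d) := by
            rw [div_mul_div_comm]
    have hdens1 : densityRatio d μ x r = m1 / r^d := by rw [densityRatio, hm1]
    rw [hdens1]
    calc c ≤ C₂ * (m1/r^d) := hkey
      _ ≤ max C₁ C₂ * (m1/r^d) :=
          mul_le_mul_of_nonneg_right (le_max_right _ _) (div_nonneg hm1nn hrd.le)

end
end

section
/- Let μ be a Radon measure on ℝⁿ, x ∈ ℝⁿ, r > 0, c ≥ 0, and let L be an affine d-plane with dist(x,L) ≤ 2r. Then (1/r^d)·∫_{B(x,r)} (dist(y,L)/r) dμ(y) ≤ C(n,d)·F_{B(x,2r)}(μ, c·H^d|_L)/r^{d+1}. In particular, the β-number β_{μ,1}^d(x,r) := inf_{L'} (1/r^d)∫_{B(x,r)} (dist(y,L')/r) dμ(y), where the infimum is over affine d-planes L', satisfies β_{μ,1}^d(x,r) ≤ C(n,d)·F_{B(x,2r)}(μ, c·H^d|_L)/r^{d+1}. -/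
open MeasureTheory Metric Set
open scoped ENNReal NNReal

noncomputable section

/-- The Jones coefficient `β_{μ,1}^d(x,r)`. -/
def betaCoef {n : ℕ} (d : ℕ) (μ : Measure (EuclideanSpace ℝ (Fin n)))
    (x : EuclideanSpace ℝ (Fin n)) (r : ℝ) : ℝ :=
  sInf { t : ℝ | ∃ L' : AffineSubspace ℝ (EuclideanSpace ℝ (Fin n)),
    IsAffineDPlane d L' ∧
    t = (1 / r ^ d) *
      ∫ y in ball x r, infDist y (L' : Set (EuclideanSpace ℝ (Fin n))) / r ∂μ }

open Module in
/-- Hausdorff measure of a `d`-dimensional affine subspace is finite on balls. -/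
lemma haus_ball_lt_top {n d : ℕ} (L : AffineSubspace ℝ (EuclideanSpace ℝ (Fin n)))
    (hne : (L : Set (EuclideanSpace ℝ (Fin n))).Nonempty)
    (hdim : Module.finrank ℝ L.direction = d)
    (x : EuclideanSpace ℝ (Fin n)) (R : ℝ) :
    μH[(d:ℝ)] ((L : Set (EuclideanSpace ℝ (Fin n))) ∩ ball x R) < ∞ := by
  subst hdim
  obtain ⟨p, hp⟩ := hne
  set m := Module.finrank ℝ L.direction with hm
  let B := stdOrthonormalBasis ℝ L.direction
  let f : EuclideanSpace ℝ (Fin m) → EuclideanSpace ℝ (Fin n) :=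
    fun w => ((B.repr.symm w : L.direction) : EuclideanSpace ℝ (Fin n)) + p
  have hf : Isometry f := Isometry.of_dist_eq fun w₁ w₂ => by
    simp only [f, dist_add_right]
    rw [← Subtype.dist_eq, LinearIsometryEquiv.dist_map]
  have hsub : (L : Set (EuclideanSpace ℝ (Fin n))) ∩ ball x R
      ⊆ f '' (f ⁻¹' closedBall x R) := by
    rintro y ⟨hyL, hyB⟩
    have hmem : y - p ∈ L.direction := by
      simpa [vsub_eq_sub] using AffineSubspace.vsub_mem_direction hyL hp
    have hfy : f (B.repr ⟨y - p, hmem⟩) = y := by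
      simp [f, sub_add_cancel]
    refine ⟨B.repr ⟨y - p, hmem⟩, ?_, hfy⟩
    rw [Set.mem_preimage, hfy]
    exact ball_subset_closedBall hyB
  have hK : IsCompact (f ⁻¹' closedBall x R) :=
    Metric.isCompact_of_isClosed_isBounded
      (IsClosed.preimage hf.continuous Metric.isClosed_closedBall)
      (hf.antilipschitz.isBounded_preimage isBounded_closedBall)
  have hfin : IsFiniteMeasureOnCompacts (μH[(m:ℝ)] : Measure (EuclideanSpace ℝ (Fin m))) := by
    have h := MeasureTheory.isAddHaarMeasure_hausdorffMeasure
      (E := EuclideanSpace ℝ (Fin m))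
    rw [finrank_euclideanSpace_fin] at h
    exact h.toIsFiniteMeasureOnCompacts
  calc μH[(m:ℝ)] ((L : Set (EuclideanSpace ℝ (Fin n))) ∩ ball x R)
      ≤ μH[(m:ℝ)] (f '' (f ⁻¹' closedBall x R)) := measure_mono hsub
    _ = μH[(m:ℝ)] (f ⁻¹' closedBall x R) :=
        hf.hausdorffMeasure_image (Or.inl (Nat.cast_nonneg _)) _
    _ < ∞ := hK.measure_lt_top


lemma far_point {n : ℕ} (hn : 0 < n) (x : EuclideanSpace ℝ (Fin n)) {s : ℝ} (hs : 0 ≤ s) :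
    ∃ z : EuclideanSpace ℝ (Fin n), dist z x = s := by
  refine ⟨x + s • EuclideanSpace.single (⟨0, hn⟩ : Fin n) (1:ℝ), ?_⟩
  simp [dist_eq_norm, norm_smul, EuclideanSpace.norm_single, abs_of_nonneg hs]

lemma bound5 {n : ℕ} (hn : 0 < n) {x : EuclideanSpace ℝ (Fin n)} {r : ℝ} (hr : 0 < r)
    {φ : EuclideanSpace ℝ (Fin n) → ℝ} (hlip : LipschitzWith 1 φ)
    (hsupp : Function.support φ ⊆ ball x (2 * r)) : ∀ y, |φ y| ≤ 5 * r := by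
  obtain ⟨z, hz⟩ := far_point hn x (s := 3 * r) (by linarith)
  have hzφ : φ z = 0 := by
    by_contra h
    have := hsupp (Function.mem_support.2 h)
    rw [mem_ball, hz] at this; linarith
  intro y
  by_cases hy : y ∈ ball x (2 * r)
  · have h1 : |φ y - φ z| ≤ dist y z := by
      have := hlip.dist_le_mul y z
      simpa [Real.dist_eq] using this
    have h2 : dist y z ≤ dist y x + dist x z := dist_triangle _ _ _
    have h3 : dist x z = 3 * r := by rw [dist_comm]; exact hz
    have hyx : dist y x < 2 * r := mem_ball.1 hy
    rw [hzφ, sub_zero] at h1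
    linarith
  · have : φ y = 0 := by
      by_contra h; exact hy (hsupp (Function.mem_support.2 h))
    rw [this, abs_zero]; linarith

lemma aux_int {n : ℕ} (ρ : Measure (EuclideanSpace ℝ (Fin n))) (x : EuclideanSpace ℝ (Fin n))
    {R M : ℝ} (hρ : ρ (ball x R) ≠ ∞) {φ : EuclideanSpace ℝ (Fin n) → ℝ}
    (hφc : Continuous φ) (hsupp : Function.support φ ⊆ ball x R)
    (hM : ∀ y, |φ y| ≤ M) :
    Integrable φ ρ ∧ |∫ y, φ y ∂ρ| ≤ M * (ρ (ball x R)).toReal := by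
  have hg : Integrable ((ball x R).indicator fun _ => M) ρ :=
    (integrable_indicator_iff measurableSet_ball).2 (integrableOn_const hρ)
  have hle : ∀ y, ‖φ y‖ ≤ (ball x R).indicator (fun _ => M) y := by
    intro y
    by_cases hy : y ∈ ball x R
    · simpa [Set.indicator_of_mem hy] using hM y
    · have h0 : φ y = 0 := by
        by_contra h; exact hy (hsupp (Function.mem_support.2 h))
      simp [Set.indicator_of_notMem hy, h0]
  have hint : Integrable φ ρ := hg.mono' hφc.aestronglyMeasurable (ae_of_all _ hle)
  refine ⟨hint, ?_⟩
  calc |∫ y, φ y ∂ρ| ≤ ∫ y, (ball x R).indicator (fun _ => M) y ∂ρ :=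
        norm_integral_le_of_norm_le hg (ae_of_all _ hle)
    _ = M * (ρ (ball x R)).toReal := by
        rw [integral_indicator_const _ measurableSet_ball, smul_eq_mul, mul_comm, measureReal_def]


/-- The `β`-numbers are controlled by the `α`-numbers (via the `F`-distance). -/
theorem statement7 (n d : ℕ) (hd : 1 ≤ d) (hdn : d ≤ n) :
    ∃ C : ℝ, 0 < C ∧
      ∀ (μ : Measure (EuclideanSpace ℝ (Fin n))) [IsLocallyFiniteMeasure μ]
        (x : EuclideanSpace ℝ (Fin n)) (r : ℝ), 0 < r →
        ∀ c : ℝ, 0 ≤ c →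
        ∀ (L : AffineSubspace ℝ (EuclideanSpace ℝ (Fin n))), IsAffineDPlane d L →
        infDist x (L : Set (EuclideanSpace ℝ (Fin n))) ≤ 2 * r →
        (1 / r ^ d) *
            (∫ y in ball x r, infDist y (L : Set (EuclideanSpace ℝ (Fin n))) / r ∂μ) ≤
          C * FB (ball x (2 * r)) μ
              ((ENNReal.ofReal c) •
                (μH[(d:ℝ)]).restrict (L : Set (EuclideanSpace ℝ (Fin n)))) / r ^ (d + 1) ∧
        betaCoef d μ x r ≤
          C * FB (ball x (2 * r)) μ
              ((ENNReal.ofReal c) •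
                (μH[(d:ℝ)]).restrict (L : Set (EuclideanSpace ℝ (Fin n)))) / r ^ (d + 1) := by
  refine ⟨3, by norm_num, ?_⟩
  intro μ _ x r hr c hc L hL hxL
  have hn : 0 < n := lt_of_lt_of_le hd hdn
  set ν : Measure (EuclideanSpace ℝ (Fin n)) :=
    (ENNReal.ofReal c) • (μH[(d:ℝ)]).restrict (L : Set (EuclideanSpace ℝ (Fin n))) with hν
  have hμB : μ (ball x (2 * r)) ≠ ∞ := measure_ball_lt_top.ne
  have hνB : ν (ball x (2 * r)) ≠ ∞ := by
    have h1 := haus_ball_lt_top L hL.1 hL.2 x (2 * r)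
    rw [Set.inter_comm] at h1
    simp only [hν, Measure.smul_apply, smul_eq_mul,
      Measure.restrict_apply measurableSet_ball]
    exact (ENNReal.mul_lt_top ENNReal.ofReal_lt_top h1).ne
  -- the FB set and its boundedness
  set S := { t : ℝ | ∃ φ : EuclideanSpace ℝ (Fin n) → ℝ,
    LipschitzWith 1 φ ∧ Function.support φ ⊆ ball x (2 * r) ∧
    t = |(∫ y, φ y ∂μ) - (∫ y, φ y ∂ν)| } with hS
  have hbdd : BddAbove S := by
    refine ⟨5 * r * (μ (ball x (2 * r))).toReal + 5 * r * (ν (ball x (2 * r))).toReal, ?_⟩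
    rintro t ⟨φ, hlip, hsupp, rfl⟩
    have hM := bound5 hn hr hlip hsupp
    obtain ⟨hi1, hb1⟩ := aux_int μ x hμB hlip.continuous hsupp hM
    obtain ⟨hi2, hb2⟩ := aux_int ν x hνB hlip.continuous hsupp hM
    have : |(∫ y, φ y ∂μ) - (∫ y, φ y ∂ν)| ≤ |∫ y, φ y ∂μ| + |∫ y, φ y ∂ν| :=
      abs_sub _ _
    linarith
  -- the test function
  set φ₀ : EuclideanSpace ℝ (Fin n) → ℝ :=
    fun y => min (infDist y (L : Set (EuclideanSpace ℝ (Fin n))))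
      (infDist y (ball x (2 * r))ᶜ) with hφ₀
  have hlip0 : LipschitzWith 1 φ₀ := by
    simpa using (lipschitz_infDist_pt ((L : Set (EuclideanSpace ℝ (Fin n))))).min
      (lipschitz_infDist_pt ((ball x (2 * r))ᶜ))
  have hsupp0 : Function.support φ₀ ⊆ ball x (2 * r) := by
    intro y hy
    by_contra hyb
    have h0 : infDist y (ball x (2 * r))ᶜ = 0 := infDist_zero_of_mem hyb
    refine hy ?_
    show min (infDist y (L : Set (EuclideanSpace ℝ (Fin n)))) (infDist y (ball x (2 * r))ᶜ) = 0
    rw [h0]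
    exact min_eq_right infDist_nonneg
  have hpos0 : ∀ y, 0 ≤ φ₀ y := fun y => le_min infDist_nonneg infDist_nonneg
  have hM0 := bound5 hn hr hlip0 hsupp0
  have hint0 : Integrable φ₀ μ := (aux_int μ x hμB hlip0.continuous hsupp0 hM0).1
  have hν0 : ∫ y, φ₀ y ∂ν = 0 := by
    rw [hν, integral_smul_measure,
      setIntegral_eq_zero_of_forall_eq_zero (fun y hy => by
        simp [hφ₀, min_eq_left (infDist_nonneg), infDist_zero_of_mem hy]), smul_zero]
  have hFB : ∫ y, φ₀ y ∂μ ≤ FB (ball x (2 * r)) μ ν := by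
    have h := le_csSup hbdd (⟨φ₀, hlip0, hsupp0, rfl⟩ :
      |(∫ y, φ₀ y ∂μ) - (∫ y, φ₀ y ∂ν)| ∈ S)
    rw [hν0, sub_zero] at h
    exact (le_abs_self _).trans h
  -- pointwise comparison on the small ball
  have hkey : ∀ y ∈ ball x r,
      infDist y (L : Set (EuclideanSpace ℝ (Fin n))) ≤ 3 * φ₀ y := by
    intro y hy
    have hyx : dist y x < r := mem_ball.1 hy
    have ha : infDist y (L : Set (EuclideanSpace ℝ (Fin n))) ≤ 3 * r := by
      have := infDist_le_infDist_add_dist (x := y) (y := x)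
        (s := (L : Set (EuclideanSpace ℝ (Fin n))))
      linarith
    have hb : r ≤ infDist y (ball x (2 * r))ᶜ := by
      obtain ⟨z, hz⟩ := far_point hn x (s := 3 * r) (by linarith)
      have hzc : z ∈ (ball x (2 * r))ᶜ := by
        simp only [mem_compl_iff, mem_ball, not_lt, hz]; linarith
      by_contra hcon
      push_neg at hcon
      obtain ⟨w, hw, hww⟩ := (infDist_lt_iff ⟨z, hzc⟩).1 hcon
      have h2 : 2 * r ≤ dist w x := by
        have := mem_compl_iff _ _ |>.1 hw
        rw [mem_ball, not_lt] at this; exact this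
      have h3 : dist w x ≤ dist w y + dist y x := dist_triangle _ _ _
      rw [dist_comm] at hww
      linarith
    rcases le_total (infDist y (L : Set (EuclideanSpace ℝ (Fin n))))
        (infDist y (ball x (2 * r))ᶜ) with h | h
    · have : φ₀ y = infDist y (L : Set (EuclideanSpace ℝ (Fin n))) := min_eq_left h
      rw [this]; linarith [infDist_nonneg (s := (L : Set (EuclideanSpace ℝ (Fin n)))) (x := y)]
    · have : φ₀ y = infDist y (ball x (2 * r))ᶜ := min_eq_right h
      rw [this]; linarith
  -- integral comparison
  have hIb : IntegrableOn
      (fun y => infDist y (L : Set (EuclideanSpace ℝ (Fin n))) / r) (ball x r) μ := by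
    have h1 : IntegrableOn
        (fun y => infDist y (L : Set (EuclideanSpace ℝ (Fin n))) / r) (closedBall x r) μ :=
      (((continuous_infDist_pt _).div_const r).continuousOn).integrableOn_compact
        (isCompact_closedBall x r)
    exact h1.mono_set ball_subset_closedBall
  have hIb2 : IntegrableOn (fun y => 3 * φ₀ y / r) (ball x r) μ :=
    ((hint0.const_mul 3).div_const r).integrableOn
  have hmono : ∫ y in ball x r, infDist y (L : Set (EuclideanSpace ℝ (Fin n))) / r ∂μ
      ≤ ∫ y in ball x r, 3 * φ₀ y / r ∂μ :=
    setIntegral_mono_on hIb hIb2 measurableSet_ball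
      (fun y hy => (div_le_div_iff_of_pos_right hr).2 (hkey y hy))
  have h2 : ∫ y in ball x r, 3 * φ₀ y / r ∂μ = (3 / r) * ∫ y in ball x r, φ₀ y ∂μ := by
    simp_rw [show ∀ a : ℝ, 3 * a / r = (3 / r) * a from fun a => by ring]
    exact integral_const_mul _ _
  have h3 : ∫ y in ball x r, φ₀ y ∂μ ≤ ∫ y, φ₀ y ∂μ :=
    setIntegral_le_integral hint0 (ae_of_all _ hpos0)
  have hchain : ∫ y in ball x r, infDist y (L : Set (EuclideanSpace ℝ (Fin n))) / r ∂μ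
      ≤ (3 / r) * FB (ball x (2 * r)) μ ν := by
    rw [h2] at hmono
    have h4 : (3 / r) * ∫ y in ball x r, φ₀ y ∂μ ≤ (3 / r) * FB (ball x (2 * r)) μ ν :=
      mul_le_mul_of_nonneg_left (h3.trans hFB) (by positivity)
    linarith
  have hmain : (1 / r ^ d) *
      (∫ y in ball x r, infDist y (L : Set (EuclideanSpace ℝ (Fin n))) / r ∂μ) ≤
      3 * FB (ball x (2 * r)) μ ν / r ^ (d + 1) := by
    have h5 : (1 / r ^ d) *
        (∫ y in ball x r, infDist y (L : Set (EuclideanSpace ℝ (Fin n))) / r ∂μ) ≤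
        (1 / r ^ d) * ((3 / r) * FB (ball x (2 * r)) μ ν) :=
      mul_le_mul_of_nonneg_left hchain (by positivity)
    have h6 : (1 / r ^ d) * ((3 / r) * FB (ball x (2 * r)) μ ν)
        = 3 * FB (ball x (2 * r)) μ ν / r ^ (d + 1) := by
      rw [pow_succ]
      field_simp
    linarith
  refine ⟨hmain, ?_⟩
  have hblow : BddBelow { t : ℝ | ∃ L' : AffineSubspace ℝ (EuclideanSpace ℝ (Fin n)),
      IsAffineDPlane d L' ∧
      t = (1 / r ^ d) *
        ∫ y in ball x r, infDist y (L' : Set (EuclideanSpace ℝ (Fin n))) / r ∂μ } := by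
    refine ⟨0, ?_⟩
    rintro t ⟨L', hL', rfl⟩
    have : 0 ≤ ∫ y in ball x r, infDist y (L' : Set (EuclideanSpace ℝ (Fin n))) / r ∂μ :=
      integral_nonneg fun y => div_nonneg infDist_nonneg hr.le
    positivity
  have hmem : (1 / r ^ d) *
      (∫ y in ball x r, infDist y (L : Set (EuclideanSpace ℝ (Fin n))) / r ∂μ)
      ∈ { t : ℝ | ∃ L' : AffineSubspace ℝ (EuclideanSpace ℝ (Fin n)),
      IsAffineDPlane d L' ∧
      t = (1 / r ^ d) *
        ∫ y in ball x r, infDist y (L' : Set (EuclideanSpace ℝ (Fin n))) / r ∂μ } :=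
    ⟨L, hL, rfl⟩
  exact (csInf_le hblow hmem).trans hmain


end
end

section
/- In ℝ², let L := ℝ×{0}, h > 0, L′ := ℝ×{h}, 0 < a < 1, and μ₁ := (1−a)·H¹|_L + a·H¹|_{L′}. Then for every x ∈ ℝ², every r > 0, and every 1-Lipschitz function φ : ℝ² → ℝ with supp φ ⊂ B(x,r), one has |∫ φ d(H¹|_L) − ∫ φ dμ₁| ≤ 4ahr. -/
open MeasureTheory Metric Set
open scoped ENNReal NNReal

noncomputable section

namespace Statement14Aux

/-- The horizontal line at height `c`, as an isometric embedding of `ℝ`. -/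
def emb (c : ℝ) : ℝ → EuclideanSpace ℝ (Fin 2) :=
  fun t => (WithLp.equiv 2 (Fin 2 → ℝ)).symm ![t, c]

@[simp] lemma emb_apply_zero (c t : ℝ) : emb c t 0 = t := rfl

@[simp] lemma emb_apply_one (c t : ℝ) : emb c t 1 = c := rfl

lemma isometry_emb (c : ℝ) : Isometry (emb c) := by
  apply Isometry.of_dist_eq
  intro s t
  rw [EuclideanSpace.dist_eq, Fin.sum_univ_two]
  simp only [emb_apply_zero, emb_apply_one, dist_self]
  rw [Real.dist_eq]
  have h2 : |s - t| ^ 2 + 0 ^ 2 = |s - t| ^ 2 := by ring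
  rw [h2, Real.sqrt_sq (abs_nonneg _)]

lemma range_emb (c : ℝ) :
    Set.range (emb c) = {p : EuclideanSpace ℝ (Fin 2) | p 1 = c} := by
  ext p
  constructor
  · rintro ⟨t, rfl⟩; rfl
  · intro hp
    refine ⟨p 0, ?_⟩
    have : ∀ i : Fin 2, emb c (p 0) i = p i := by
      intro i
      fin_cases i
      · rfl
      · simpa using hp.symm
    exact PiLp.ext this

lemma restrict_line (c : ℝ) :
    (μH[(1:ℝ)] : Measure (EuclideanSpace ℝ (Fin 2))).restrict {p | p 1 = c}
      = Measure.map (emb c) volume := by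
  rw [← MeasureTheory.hausdorffMeasure_real,
    (isometry_emb c).map_hausdorffMeasure (Or.inl zero_le_one), range_emb]

lemma coord_dist_le (u v : EuclideanSpace ℝ (Fin 2)) (i : Fin 2) :
    dist (u i) (v i) ≤ dist u v := by
  have h1 := (PiLp.lipschitzWith_ofLp 2 (fun _ : Fin 2 => ℝ)).dist_le_mul u v
  have h2 := dist_le_pi_dist (WithLp.equiv 2 (Fin 2 → ℝ) u)
    (WithLp.equiv 2 (Fin 2 → ℝ) v) i
  simp only [NNReal.coe_one, one_mul] at h1
  exact h2.trans h1

lemma dist_emb_emb (c c' t : ℝ) : dist (emb c t) (emb c' t) = |c - c'| := by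
  rw [EuclideanSpace.dist_eq, Fin.sum_univ_two]
  simp only [emb_apply_zero, emb_apply_one, dist_self]
  have : (0:ℝ) ^ 2 + dist c c' ^ 2 = dist c c' ^ 2 := by ring
  rw [this, Real.sqrt_sq dist_nonneg, Real.dist_eq]

end Statement14Aux

open Statement14Aux

/-- For `μ₁ = (1−a)·H¹|_L + a·H¹|_{L(h)}`, the `F`-distance of `μ₁` to `H¹|_L` on any ball
`B(x,r)` is at most `4ahr`. -/
theorem statement14 (h : ℝ) (hh : 0 < h) (a : ℝ) (ha0 : 0 < a) (ha1 : a < 1)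
    (L L' : Set (EuclideanSpace ℝ (Fin 2)))
    (hL : L = {p : EuclideanSpace ℝ (Fin 2) | p 1 = 0})
    (hL' : L' = {p : EuclideanSpace ℝ (Fin 2) | p 1 = h})
    (μ₁ : Measure (EuclideanSpace ℝ (Fin 2)))
    (hμ₁ : μ₁ = ENNReal.ofReal (1 - a) • (μH[(1:ℝ)]).restrict L
        + ENNReal.ofReal a • (μH[(1:ℝ)]).restrict L') :
    ∀ (x : EuclideanSpace ℝ (Fin 2)) (r : ℝ), 0 < r →
      ∀ φ : EuclideanSpace ℝ (Fin 2) → ℝ, LipschitzWith 1 φ →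
        Function.support φ ⊆ ball x r →
        |(∫ y, φ y ∂((μH[(1:ℝ)]).restrict L)) - ∫ y, φ y ∂μ₁| ≤ 4 * a * h * r := by
  intro x r hr φ hφ hsφ
  have hφc : Continuous φ := hφ.continuous
  -- everything is supported in the interval `Ioo (x 0 - r) (x 0 + r)`
  set S : Set ℝ := Set.Ioo (x 0 - r) (x 0 + r) with hS
  have hsupp : ∀ c t, φ (emb c t) ≠ 0 → t ∈ S := by
    intro c t ht
    have hb : emb c t ∈ ball x r := hsφ ht
    have h1 : dist t (x 0) ≤ dist (emb c t) x := by
      simpa using coord_dist_le (emb c t) x 0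
    have h2 : dist t (x 0) < r := lt_of_le_of_lt h1 (mem_ball.mp hb)
    rw [Real.dist_eq] at h2
    rcases abs_lt.mp h2 with ⟨h3, h4⟩
    exact ⟨by linarith, by linarith⟩
  -- integrability of the sections
  have hint : ∀ c : ℝ, Integrable (fun t => φ (emb c t)) volume := by
    intro c
    apply Continuous.integrable_of_hasCompactSupport
      (hφc.comp (isometry_emb c).continuous)
    apply HasCompactSupport.intro (isCompact_Icc (a := x 0 - r) (b := x 0 + r))
    intro t ht
    by_contra hne
    exact ht (Set.Ioo_subset_Icc_self (hsupp c t hne))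
  -- integrals over the lines
  have hline : ∀ c : ℝ,
      ∫ y, φ y ∂((μH[(1:ℝ)] :
          Measure (EuclideanSpace ℝ (Fin 2))).restrict {p | p 1 = c})
        = ∫ t, φ (emb c t) := by
    intro c
    rw [restrict_line c,
      integral_map (isometry_emb c).continuous.aemeasurable
        hφc.aestronglyMeasurable]
  have hintline : ∀ c : ℝ,
      Integrable φ ((μH[(1:ℝ)] :
          Measure (EuclideanSpace ℝ (Fin 2))).restrict {p | p 1 = c}) := by
    intro c
    rw [restrict_line c]
    exact (integrable_map_measure hφc.aestronglyMeasurable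
      (isometry_emb c).continuous.aemeasurable).2 (hint c)
  -- decompose the integral against μ₁
  have hμ₁int : ∫ y, φ y ∂μ₁
      = (1 - a) * (∫ t, φ (emb 0 t)) + a * (∫ t, φ (emb h t)) := by
    rw [hμ₁, hL, hL']
    rw [integral_add_measure
      ((hintline 0).smul_measure ENNReal.ofReal_ne_top)
      ((hintline h).smul_measure ENNReal.ofReal_ne_top),
      integral_smul_measure, integral_smul_measure,
      ENNReal.toReal_ofReal (by linarith), ENNReal.toReal_ofReal (by linarith),
      hline 0, hline h]
    simp [smul_eq_mul]
  rw [hL, hline 0, hμ₁int]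
  have key : |(∫ t, φ (emb 0 t)) - ∫ t, φ (emb h t)| ≤ 2 * h * r := by
    rw [← integral_sub (hint 0) (hint h)]
    set g : ℝ → ℝ := fun t => φ (emb 0 t) - φ (emb h t) with hg
    have hgsupp : ∀ t ∉ S, g t = 0 := by
      intro t ht
      have h0 : φ (emb 0 t) = 0 := by
        by_contra hne; exact ht (hsupp 0 t hne)
      have h1 : φ (emb h t) = 0 := by
        by_contra hne; exact ht (hsupp h t hne)
      simp [hg, h0, h1]
    rw [← setIntegral_eq_integral_of_forall_compl_eq_zero hgsupp]
    have hvol : volume S ≠ ⊤ := by simp [hS]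
    have hgb : ∀ t ∈ S, ‖g t‖ ≤ h := by
      intro t _
      have := hφ.dist_le_mul (emb 0 t) (emb h t)
      rw [dist_emb_emb] at this
      simp only [NNReal.coe_one, one_mul] at this
      rw [Real.dist_eq] at this
      calc ‖g t‖ = |φ (emb 0 t) - φ (emb h t)| := by
            simp [hg, Real.norm_eq_abs]
          _ ≤ |(0:ℝ) - h| := this
          _ = h := by rw [abs_sub_comm]; simpa using abs_of_pos hh
    have := norm_setIntegral_le_of_norm_le_const hvol.lt_top hgb
    have hvol2 : (volume S).toReal = 2 * r := by
      rw [hS, Real.volume_Ioo]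
      rw [ENNReal.toReal_ofReal (by linarith)]
      ring
    rw [measureReal_def, hvol2] at this
    calc |∫ t in S, g t| = ‖∫ t in S, g t‖ := rfl
      _ ≤ h * (2 * r) := this
      _ = 2 * h * r := by ring
  have hX : (∫ t, φ (emb 0 t)) -
      ((1 - a) * (∫ t, φ (emb 0 t)) + a * (∫ t, φ (emb h t)))
      = a * ((∫ t, φ (emb 0 t)) - ∫ t, φ (emb h t)) := by ring
  rw [hX, abs_mul, abs_of_pos ha0]
  have hle : a * |(∫ t, φ (emb 0 t)) - ∫ t, φ (emb h t)| ≤ a * (2 * h * r) :=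
    mul_le_mul_of_nonneg_left key ha0.le
  nlinarith [mul_pos (mul_pos ha0 hh) hr]

end
end

section
/- In ℝ², let L := ℝ×{0}, h > 0, L′ := ℝ×{h}, 0 < a ≤ 1/2, and μ₁ := (1−a)·H¹|_L + a·H¹|_{L′}. There is an absolute constant C > 0 such that for every x ∈ L ∪ L′, ∫₀^∞ α_{μ₁}¹(x,r)² dr/r ≤ C·a²·log(1/a). -/
open MeasureTheory Metric Set Function
open scoped ENNReal NNReal

noncomputable section

/-! ## Auxiliary geometry on horizontal lines in `ℝ²` -/

abbrev E2 := EuclideanSpace ℝ (Fin 2)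

def lnmap (c : ℝ) : ℝ → E2 := fun t => WithLp.toLp 2 ![t, c]

lemma lnmap_apply0 (c t : ℝ) : lnmap c t 0 = t := rfl
lemma lnmap_apply1 (c t : ℝ) : lnmap c t 1 = c := rfl

lemma isometry_lnmap (c : ℝ) : Isometry (lnmap c) := by
  apply Isometry.of_dist_eq
  intro s t
  rw [EuclideanSpace.dist_eq]
  simp only [Fin.sum_univ_two, lnmap_apply0, lnmap_apply1, Real.dist_eq, sub_self, abs_zero]
  rw [show |s - t|^2 + (0:ℝ)^2 = |s-t|^2 by ring, Real.sqrt_sq (abs_nonneg _)]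

lemma range_lnmap (c : ℝ) : Set.range (lnmap c) = {p : E2 | p 1 = c} := by
  ext p
  constructor
  · rintro ⟨t, rfl⟩; exact lnmap_apply1 c t
  · intro hp
    refine ⟨p 0, ?_⟩
    have : p 1 = c := hp
    ext i
    fin_cases i
    · rfl
    · exact this.symm

lemma restrict_line (c : ℝ) :
    (μH[(1:ℝ)] : Measure E2).restrict {p : E2 | p 1 = c} = Measure.map (lnmap c) volume := by
  rw [← MeasureTheory.hausdorffMeasure_real,
    (isometry_lnmap c).map_hausdorffMeasure (Or.inl zero_le_one), range_lnmap]

lemma dist_lnmap (c t : ℝ) (x : E2) :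
    dist (lnmap c t) x = Real.sqrt ((t - x 0)^2 + (c - x 1)^2) := by
  rw [EuclideanSpace.dist_eq]
  simp only [Fin.sum_univ_two, lnmap_apply0, lnmap_apply1, Real.dist_eq, sq_abs]

lemma abs_le_dist_lnmap0 (c t : ℝ) (x : E2) : |t - x 0| ≤ dist (lnmap c t) x := by
  rw [dist_lnmap]
  calc |t - x 0| = Real.sqrt ((t - x 0)^2) := by rw [Real.sqrt_sq_eq_abs]
  _ ≤ _ := Real.sqrt_le_sqrt (by nlinarith [sq_nonneg (c - x 1)])

lemma abs_le_dist_lnmap1 (c t : ℝ) (x : E2) : |c - x 1| ≤ dist (lnmap c t) x := by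
  rw [dist_lnmap]
  calc |c - x 1| = Real.sqrt ((c - x 1)^2) := by rw [Real.sqrt_sq_eq_abs]
  _ ≤ _ := Real.sqrt_le_sqrt (by nlinarith [sq_nonneg (t - x 0)])

lemma line_ball_eq (c : ℝ) (x : E2) (r : ℝ) :
    ((μH[(1:ℝ)] : Measure E2).restrict {p : E2 | p 1 = c}) (ball x r)
      = volume {t : ℝ | dist (lnmap c t) x < r} := by
  rw [restrict_line, Measure.map_apply (isometry_lnmap c).continuous.measurable measurableSet_ball]
  rfl

lemma line_ball_le (c : ℝ) (x : E2) (r : ℝ) :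
    ((μH[(1:ℝ)] : Measure E2).restrict {p : E2 | p 1 = c}) (ball x r)
      ≤ ENNReal.ofReal (2*r) := by
  rw [line_ball_eq]
  calc volume {t : ℝ | dist (lnmap c t) x < r}
      ≤ volume (Ioo (x 0 - r) (x 0 + r)) := by
        apply measure_mono
        intro t ht
        have h1 := abs_le_dist_lnmap0 c t x
        have h2 : |t - x 0| < r := lt_of_le_of_lt h1 ht
        rw [abs_lt] at h2
        constructor <;> linarith [h2.1, h2.2]
  _ = ENNReal.ofReal (2*r) := by rw [Real.volume_Ioo]; ring_nf

lemma line_ball_ge (c : ℝ) (x : E2) (r s : ℝ)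
    (h : s^2 + (c - x 1)^2 ≤ r^2) (hr : 0 ≤ r) :
    ENNReal.ofReal (2*s) ≤
      ((μH[(1:ℝ)] : Measure E2).restrict {p : E2 | p 1 = c}) (ball x r) := by
  rw [line_ball_eq]
  calc ENNReal.ofReal (2*s) = volume (Ioo (x 0 - s) (x 0 + s)) := by
        rw [Real.volume_Ioo]; ring_nf
  _ ≤ volume {t : ℝ | dist (lnmap c t) x < r} := by
        apply measure_mono
        intro t ht
        simp only [mem_Ioo] at ht
        have h2 : |t - x 0| < s := abs_lt.mpr ⟨by linarith [ht.1], by linarith [ht.2]⟩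
        have h3 : (t - x 0)^2 < s^2 := by
          have := abs_nonneg (t - x 0)
          nlinarith [sq_abs (t - x 0)]
        show dist (lnmap c t) x < r
        rw [dist_lnmap]
        have hlt : (t - x 0)^2 + (c - x 1)^2 < r^2 := by nlinarith
        calc Real.sqrt ((t - x 0)^2 + (c - x 1)^2) < Real.sqrt (r^2) :=
              Real.sqrt_lt_sqrt (by positivity) hlt
        _ = r := Real.sqrt_sq hr

lemma integral_line (c : ℝ) (φ : E2 → ℝ) (hφ : Continuous φ) :
    (∫ y, φ y ∂((μH[(1:ℝ)] : Measure E2).restrict {p : E2 | p 1 = c}))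
      = ∫ t, φ (lnmap c t) := by
  rw [restrict_line]
  exact integral_map (isometry_lnmap c).continuous.measurable.aemeasurable
    (hφ.aestronglyMeasurable)

/-! ## The line as an affine subspace -/

def lineSub (c : ℝ) : AffineSubspace ℝ E2 :=
  AffineSubspace.mk' (lnmap c 0) (Submodule.span ℝ {(lnmap 0 1 : E2)})

lemma coe_lineSub (c : ℝ) : (lineSub c : Set E2) = {p : E2 | p 1 = c} := by
  ext p
  rw [lineSub, AffineSubspace.mem_coe, AffineSubspace.mem_mk',
    Submodule.mem_span_singleton]
  constructor
  · rintro ⟨a, ha⟩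
    have h1 : (a • (lnmap 0 1 : E2)) 1 = (p -ᵥ lnmap c 0) 1 := by rw [ha]
    have h2 : (a • (lnmap 0 1 : E2)) 1 = a * (0:ℝ) := rfl
    have h3 : (p -ᵥ lnmap c 0) 1 = p 1 - c := rfl
    show p 1 = c
    rw [h2, h3] at h1
    linarith [h1]
  · intro hp
    refine ⟨p 0, ?_⟩
    ext i
    fin_cases i
    · show (p 0) * 1 = p 0 - 0; ring
    · show (p 0) * 0 = p 1 - c; rw [show p 1 = c from hp]; ring

lemma isPlane_lineSub (c : ℝ) : IsAffineDPlane 1 (lineSub c) := by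
  constructor
  · exact ⟨lnmap c 0, AffineSubspace.self_mem_mk' _ _⟩
  · rw [lineSub, AffineSubspace.direction_mk']
    apply finrank_span_singleton
    intro hv
    have h1 : (lnmap 0 1 : E2) 0 = 1 := rfl
    rw [hv] at h1
    simp at h1

/-! ## Generalities about FB and alphaCoef -/

lemma zero_mem_FBset {n : ℕ} (B : Set (EuclideanSpace ℝ (Fin n)))
    (σ ν : Measure (EuclideanSpace ℝ (Fin n))) :
    (0:ℝ) ∈ { t : ℝ | ∃ φ : EuclideanSpace ℝ (Fin n) → ℝ,
      LipschitzWith 1 φ ∧ Function.support φ ⊆ B ∧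
      t = |(∫ y, φ y ∂σ) - (∫ y, φ y ∂ν)| } := by
  refine ⟨fun _ => 0, LipschitzWith.const' 0, by simp, by simp⟩

lemma FB_nonneg_s15 {n : ℕ} (B : Set (EuclideanSpace ℝ (Fin n)))
    (σ ν : Measure (EuclideanSpace ℝ (Fin n))) : 0 ≤ FB B σ ν := by
  by_cases hb : BddAbove { t : ℝ | ∃ φ : EuclideanSpace ℝ (Fin n) → ℝ,
      LipschitzWith 1 φ ∧ Function.support φ ⊆ B ∧
      t = |(∫ y, φ y ∂σ) - (∫ y, φ y ∂ν)| }
  · exact le_csSup hb (zero_mem_FBset B σ ν)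
  · rw [FB, Real.sSup_of_not_bddAbove hb]

lemma FB_le {n : ℕ} {B : Set (EuclideanSpace ℝ (Fin n))}
    {σ ν : Measure (EuclideanSpace ℝ (Fin n))} {M : ℝ}
    (H : ∀ φ : EuclideanSpace ℝ (Fin n) → ℝ, LipschitzWith 1 φ →
      Function.support φ ⊆ B → |(∫ y, φ y ∂σ) - (∫ y, φ y ∂ν)| ≤ M) :
    FB B σ ν ≤ M := by
  apply Real.sSup_le
  · rintro t ⟨φ, h1, h2, rfl⟩
    exact H φ h1 h2
  · have := H (fun _ => 0) (LipschitzWith.const' 0) (by simp)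
    simpa using this

lemma alphaCoef_le {n : ℕ} {d : ℕ} {μ : Measure (EuclideanSpace ℝ (Fin n))}
    {x : EuclideanSpace ℝ (Fin n)} {r : ℝ} (c : ℝ)
    (L : AffineSubspace ℝ (EuclideanSpace ℝ (Fin n)))
    (hc : 0 ≤ c) (hL : IsAffineDPlane d L) (hr : 0 ≤ r) {M : ℝ}
    (hFB : FB (ball x r) μ
        ((ENNReal.ofReal c) • (μH[(d:ℝ)]).restrict (L : Set (EuclideanSpace ℝ (Fin n)))) ≤ M) :
    alphaCoef d μ x r ≤ (1 / (r * (μ (ball x r)).toReal)) * M := by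
  rw [alphaCoef]
  have hpos : 0 ≤ 1 / (r * (μ (ball x r)).toReal) := by positivity
  apply mul_le_mul_of_nonneg_left _ hpos
  refine le_trans (csInf_le ?_ ?_) hFB
  · refine ⟨0, ?_⟩
    rintro t ⟨c', L', _, _, rfl⟩
    exact FB_nonneg_s15 _ _ _
  · exact ⟨c, L, hc, hL, rfl⟩

lemma alphaCoef_nonneg {n : ℕ} (d : ℕ) (μ : Measure (EuclideanSpace ℝ (Fin n)))
    (x : EuclideanSpace ℝ (Fin n)) {r : ℝ} (hr : 0 ≤ r) :
    0 ≤ alphaCoef d μ x r := by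
  rw [alphaCoef]
  apply mul_nonneg (by positivity)
  apply Real.sInf_nonneg
  rintro t ⟨c', L', _, _, rfl⟩
  exact FB_nonneg_s15 _ _ _

/-! ## Integrals of Lipschitz functions supported in balls -/

lemma phi_eq_zero_of_not_mem {α : Type*} {φ : α → ℝ} {B : Set α} (hsupp : support φ ⊆ B)
    {p : α} (hp : p ∉ B) : φ p = 0 := by
  by_contra hne
  exact hp (hsupp hne)

lemma phi_le_of_lipschitz {φ : E2 → ℝ} {x : E2} {r : ℝ}
    (hlip : LipschitzWith 1 φ) (hsupp : support φ ⊆ ball x r)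
    {p : E2} (hd : dist p x < r) : |φ p| ≤ r - dist p x := by
  have hr : 0 < r := lt_of_le_of_lt dist_nonneg hd
  set d := dist p x with hdd
  have hd0 : 0 ≤ d := dist_nonneg
  obtain ⟨q, hq1, hq2⟩ : ∃ q : E2, dist q x = r ∧ dist p q = r - d := by
    rcases eq_or_lt_of_le hd0 with h0 | h0
    · have hpx : p = x := by
        have : dist p x = 0 := by rw [← hdd, ← h0]
        rwa [dist_eq_zero] at this
      refine ⟨x + r • (EuclideanSpace.single 0 (1:ℝ)), ?_, ?_⟩
      · rw [dist_eq_norm]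
        have : x + r • (EuclideanSpace.single 0 (1:ℝ)) - x
            = r • (EuclideanSpace.single 0 (1:ℝ)) := by abel
        rw [this, norm_smul, EuclideanSpace.norm_single, Real.norm_eq_abs, abs_of_pos hr]
        simp
      · rw [hpx, dist_comm, dist_eq_norm, ← h0]
        have : x + r • (EuclideanSpace.single 0 (1:ℝ)) - x
            = r • (EuclideanSpace.single 0 (1:ℝ)) := by abel
        rw [this, norm_smul, EuclideanSpace.norm_single, Real.norm_eq_abs, abs_of_pos hr]
        simp
    · have hnpx : ‖p - x‖ = d := by rw [← dist_eq_norm, ← hdd]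
      refine ⟨x + (r / d) • (p - x), ?_, ?_⟩
      · rw [dist_eq_norm]
        have heq : x + (r / d) • (p - x) - x = (r / d) • (p - x) := by abel
        rw [heq, norm_smul, hnpx, Real.norm_eq_abs, abs_of_pos (by positivity)]
        field_simp
      · rw [dist_eq_norm]
        have heq : p - (x + (r / d) • (p - x)) = (1 - r / d) • (p - x) := by
          rw [sub_smul, one_smul]; abel
        have hle : 1 - r / d ≤ 0 := by
          rw [sub_nonpos, le_div_iff₀ h0]; linarith
        rw [heq, norm_smul, hnpx, Real.norm_eq_abs, abs_of_nonpos hle]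
        field_simp; ring
  have hq0 : φ q = 0 := phi_eq_zero_of_not_mem hsupp (by simp [mem_ball, hq1])
  calc |φ p| = |φ p - φ q| := by rw [hq0, sub_zero]
  _ ≤ dist p q := by
      have := hlip.dist_le_mul p q
      rwa [NNReal.coe_one, one_mul, Real.dist_eq] at this
  _ = r - d := hq2

lemma integrable_comp_lnmap {φ : E2 → ℝ} {x : E2} {r : ℝ} (c : ℝ)
    (hφ : Continuous φ) (hsupp : support φ ⊆ ball x r) :
    Integrable (fun t => φ (lnmap c t)) volume := by
  apply Continuous.integrable_of_hasCompactSupport (hφ.comp (isometry_lnmap c).continuous)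
  apply IsCompact.of_isClosed_subset (isCompact_Icc (a := x 0 - r) (b := x 0 + r))
    isClosed_closure
  apply closure_minimal _ isClosed_Icc
  intro t ht
  have h1 : lnmap c t ∈ ball x r := hsupp ht
  have h2 := abs_le_dist_lnmap0 c t x
  rw [mem_ball] at h1
  have h3 : |t - x 0| ≤ r := le_of_lt (lt_of_le_of_lt h2 h1)
  rw [abs_le] at h3
  exact ⟨by linarith [h3.1], by linarith [h3.2]⟩

lemma integrable_line {φ : E2 → ℝ} {x : E2} {r : ℝ} (c : ℝ)
    (hφ : Continuous φ) (hsupp : support φ ⊆ ball x r) :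
    Integrable φ ((μH[(1:ℝ)] : Measure E2).restrict {p : E2 | p 1 = c}) := by
  rw [restrict_line]
  rw [integrable_map_measure hφ.aestronglyMeasurable
    (isometry_lnmap c).continuous.measurable.aemeasurable]
  exact integrable_comp_lnmap c hφ hsupp

lemma integral_smul_line (b c : ℝ) (hb : 0 ≤ b) (φ : E2 → ℝ) (hφ : Continuous φ) :
    (∫ y, φ y ∂(ENNReal.ofReal b • (μH[(1:ℝ)] : Measure E2).restrict {p : E2 | p 1 = c}))
      = b * ∫ t, φ (lnmap c t) := by
  rw [integral_smul_measure, integral_line c φ hφ, ENNReal.toReal_ofReal hb, smul_eq_mul]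

lemma integral_mu1 {a h : ℝ} (ha0 : 0 ≤ a) (ha1 : a ≤ 1) {φ : E2 → ℝ} {x : E2} {r : ℝ}
    (hφ : Continuous φ) (hsupp : support φ ⊆ ball x r) :
    (∫ y, φ y ∂(ENNReal.ofReal (1 - a) • (μH[(1:ℝ)] : Measure E2).restrict {p : E2 | p 1 = 0}
        + ENNReal.ofReal a • (μH[(1:ℝ)] : Measure E2).restrict {p : E2 | p 1 = h}))
      = (1 - a) * (∫ t, φ (lnmap 0 t)) + a * (∫ t, φ (lnmap h t)) := by
  rw [integral_add_measure]
  · rw [integral_smul_line (1-a) 0 (by linarith) φ hφ, integral_smul_line a h ha0 φ hφ]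
  · exact ((integrable_line 0 hφ hsupp).smul_measure ENNReal.ofReal_ne_top)
  · exact ((integrable_line h hφ hsupp).smul_measure ENNReal.ofReal_ne_top)

/-- 1D integral bound from support and sup bounds. -/
lemma abs_integral_le_of_support {ψ : ℝ → ℝ} {A B M : ℝ} (hint : Integrable ψ)
    (hAB : A ≤ B) (hsupp : support ψ ⊆ Ioo A B) (hM : ∀ t ∈ Ioo A B, |ψ t| ≤ M) :
    |∫ t, ψ t| ≤ M * (B - A) := by
  rw [← setIntegral_eq_integral_of_forall_compl_eq_zero
    (fun t ht => phi_eq_zero_of_not_mem hsupp ht)]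
  have h1 : volume (Ioo A B) < ∞ := by
    rw [Real.volume_Ioo]; exact ENNReal.ofReal_lt_top
  have h2 := norm_setIntegral_le_of_norm_le_const (μ := volume) (s := Ioo A B) (f := ψ) h1
    (fun t ht => by rw [Real.norm_eq_abs]; exact hM t ht)
  rw [Real.norm_eq_abs] at h2
  refine le_trans h2 ?_
  rw [Real.volume_real_Ioo_of_le hAB]


/-! ## The measure μ₁ and its ball bounds -/

def mu1 (a h : ℝ) : Measure E2 :=
  ENNReal.ofReal (1 - a) • (μH[(1:ℝ)] : Measure E2).restrict {p : E2 | p 1 = 0}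
    + ENNReal.ofReal a • (μH[(1:ℝ)] : Measure E2).restrict {p : E2 | p 1 = h}

lemma mu1_ball_eq (a h : ℝ) (x : E2) (r : ℝ) :
    mu1 a h (ball x r)
      = ENNReal.ofReal (1 - a) * ((μH[(1:ℝ)] : Measure E2).restrict {p : E2 | p 1 = 0}) (ball x r)
        + ENNReal.ofReal a * ((μH[(1:ℝ)] : Measure E2).restrict {p : E2 | p 1 = h}) (ball x r) := by
  rw [mu1, Measure.add_apply, Measure.smul_apply, Measure.smul_apply, smul_eq_mul, smul_eq_mul]

lemma mu1_ball_ne_top (a h : ℝ) (x : E2) (r : ℝ) : mu1 a h (ball x r) ≠ ⊤ := by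
  rw [mu1_ball_eq]
  apply ne_of_lt
  apply ENNReal.add_lt_top.mpr
  constructor <;>
  · apply lt_of_le_of_lt (mul_le_mul_right (line_ball_le _ x r) _)
    exact ENNReal.mul_lt_top ENNReal.ofReal_lt_top ENNReal.ofReal_lt_top

lemma mu1_ball_toReal_ge0 {a h : ℝ} (x : E2) {r s : ℝ} (ha : a ≤ 1)
    (hs : 0 ≤ s) (hle : s^2 + (0 - x 1)^2 ≤ r^2) (hr : 0 ≤ r) :
    (1 - a) * (2 * s) ≤ (mu1 a h (ball x r)).toReal := by
  have key : ENNReal.ofReal ((1 - a) * (2 * s)) ≤ mu1 a h (ball x r) := by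
    rw [mu1_ball_eq, ENNReal.ofReal_mul (by linarith)]
    exact le_add_right (mul_le_mul_right (line_ball_ge 0 x r s hle hr) _)
  have := ENNReal.toReal_mono (mu1_ball_ne_top a h x r) key
  rwa [ENNReal.toReal_ofReal (by nlinarith)] at this

lemma mu1_ball_toReal_geh {a h : ℝ} (x : E2) {r s : ℝ} (ha : 0 ≤ a)
    (hs : 0 ≤ s) (hle : s^2 + (h - x 1)^2 ≤ r^2) (hr : 0 ≤ r) :
    a * (2 * s) ≤ (mu1 a h (ball x r)).toReal := by
  have key : ENNReal.ofReal (a * (2 * s)) ≤ mu1 a h (ball x r) := by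
    rw [mu1_ball_eq, ENNReal.ofReal_mul ha]
    exact le_add_left (mul_le_mul_right (line_ball_ge h x r s hle hr) _)
  have := ENNReal.toReal_mono (mu1_ball_ne_top a h x r) key
  rwa [ENNReal.toReal_ofReal (by positivity)] at this

/-! ## FB estimates -/

lemma not_mem_ball_lnmap {c : ℝ} {x : E2} {r t : ℝ} (hcx : r ≤ |c - x 1|) :
    lnmap c t ∉ ball x r := by
  rw [mem_ball]
  push_neg
  exact le_trans hcx (abs_le_dist_lnmap1 c t x)

/-- At scales `r ≤ |c' − x 1|`, the line at height `c'` does not matter. -/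
lemma integral_lnmap_zero {φ : E2 → ℝ} {x : E2} {r : ℝ} (c : ℝ)
    (hsupp : support φ ⊆ ball x r) (hcx : r ≤ |c - x 1|) :
    (∫ t, φ (lnmap c t)) = 0 := by
  have : (fun t => φ (lnmap c t)) = fun _ => (0:ℝ) := by
    funext t
    exact phi_eq_zero_of_not_mem hsupp (not_mem_ball_lnmap hcx)
  rw [this, integral_zero]

lemma FB_zero_L {a h : ℝ} (ha0 : 0 ≤ a) (ha1 : a ≤ 1) (hh : 0 ≤ h) {x : E2} {r : ℝ}
    (hx : x 1 = 0) (hrh : r ≤ h) :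
    FB (ball x r) (mu1 a h)
      (ENNReal.ofReal (1-a) • (μH[(1:ℝ)] : Measure E2).restrict
        ((lineSub 0 : AffineSubspace ℝ E2) : Set E2)) ≤ 0 := by
  apply FB_le
  intro φ hlip hsupp
  rw [coe_lineSub, mu1, integral_mu1 ha0 ha1 hlip.continuous hsupp,
    integral_smul_line (1-a) 0 (by linarith) φ hlip.continuous,
    integral_lnmap_zero h hsupp (by rw [hx, sub_zero, abs_of_nonneg hh]; exact hrh)]
  simp

lemma FB_zero_L' {a h : ℝ} (ha0 : 0 ≤ a) (ha1 : a ≤ 1) {x : E2} {r : ℝ}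
    (hx : x 1 = h) (hrh : r ≤ h) (hh : 0 < h) :
    FB (ball x r) (mu1 a h)
      (ENNReal.ofReal a • (μH[(1:ℝ)] : Measure E2).restrict
        ((lineSub h : AffineSubspace ℝ E2) : Set E2)) ≤ 0 := by
  apply FB_le
  intro φ hlip hsupp
  rw [coe_lineSub, mu1, integral_mu1 ha0 ha1 hlip.continuous hsupp,
    integral_smul_line a h ha0 φ hlip.continuous,
    integral_lnmap_zero 0 hsupp (by rw [hx, zero_sub, abs_neg, abs_of_pos hh]; exact hrh)]
  simp

lemma FB_trans {a h : ℝ} (ha0 : 0 ≤ a) (ha1 : a ≤ 1) (hh : 0 ≤ h) {x : E2} {r : ℝ}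
    (hr : 0 < r) :
    FB (ball x r) (mu1 a h)
      (ENNReal.ofReal 1 • (μH[(1:ℝ)] : Measure E2).restrict
        ((lineSub 0 : AffineSubspace ℝ E2) : Set E2)) ≤ a * (h * (2 * r)) := by
  apply FB_le
  intro φ hlip hsupp
  rw [coe_lineSub, mu1, integral_mu1 ha0 ha1 hlip.continuous hsupp,
    integral_smul_line 1 0 zero_le_one φ hlip.continuous]
  have hint0 := integrable_comp_lnmap 0 hlip.continuous hsupp
  have hinth := integrable_comp_lnmap h hlip.continuous hsupp
  have heq : (1 - a) * (∫ t, φ (lnmap 0 t)) + a * (∫ t, φ (lnmap h t))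
      - 1 * (∫ t, φ (lnmap 0 t))
      = a * ((∫ t, φ (lnmap h t)) - (∫ t, φ (lnmap 0 t))) := by ring
  rw [heq, abs_mul, abs_of_nonneg ha0]
  apply mul_le_mul_of_nonneg_left _ ha0
  rw [← integral_sub hinth hint0]
  have := abs_integral_le_of_support (ψ := fun t => φ (lnmap h t) - φ (lnmap 0 t))
    (A := x 0 - r) (B := x 0 + r) (M := h)
    (hinth.sub hint0) (by linarith)
    (fun t ht => by
      simp only [mem_Ioo]
      by_contra hcon
      push_neg at hcon
      have habs : r ≤ |t - x 0| := by
        rcases le_or_gt t (x 0 - r) with h1 | h1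
        · rw [abs_of_nonpos (by linarith)]; linarith
        · have h2 := hcon h1
          rw [abs_of_nonneg (by linarith)]; linarith
      have hz : ∀ c : ℝ, φ (lnmap c t) = 0 := fun c =>
        phi_eq_zero_of_not_mem hsupp (by
          rw [mem_ball]; push_neg; exact le_trans habs (abs_le_dist_lnmap0 c t x))
      have : φ (lnmap h t) - φ (lnmap 0 t) = 0 := by rw [hz h, hz 0, sub_zero]
      exact (mem_support.mp ht) this)
    (fun t _ => by
      have := hlip.dist_le_mul (lnmap h t) (lnmap 0 t)
      rw [NNReal.coe_one, one_mul, Real.dist_eq] at this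
      refine le_trans this ?_
      rw [dist_lnmap]
      have : (t - (lnmap 0 t) 0)^2 + (h - (lnmap 0 t) 1)^2 = h^2 := by
        rw [lnmap_apply0, lnmap_apply1]; ring
      rw [this, Real.sqrt_sq hh])
  calc |∫ t, (φ (lnmap h t) - φ (lnmap 0 t))| ≤ h * ((x 0 + r) - (x 0 - r)) := this
  _ = h * (2 * r) := by ring

lemma FB_small {a h : ℝ} (ha0 : 0 ≤ a) (ha1 : a ≤ 1) {x : E2} {r : ℝ}
    (hx : x 1 = h) (hh : 0 < h) (hhr : h < r) :
    FB (ball x r) (mu1 a h)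
      (ENNReal.ofReal a • (μH[(1:ℝ)] : Measure E2).restrict
        ((lineSub h : AffineSubspace ℝ E2) : Set E2))
      ≤ (r - h) * (2 * Real.sqrt (r^2 - h^2)) := by
  set s := Real.sqrt (r^2 - h^2) with hs
  have hs0 : 0 ≤ s := Real.sqrt_nonneg _
  have hs2 : s^2 = r^2 - h^2 := Real.sq_sqrt (by nlinarith)
  apply FB_le
  intro φ hlip hsupp
  rw [coe_lineSub, mu1, integral_mu1 ha0 ha1 hlip.continuous hsupp,
    integral_smul_line a h ha0 φ hlip.continuous]
  have heq : (1 - a) * (∫ t, φ (lnmap 0 t)) + a * (∫ t, φ (lnmap h t))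
      - a * (∫ t, φ (lnmap h t)) = (1 - a) * (∫ t, φ (lnmap 0 t)) := by ring
  rw [heq, abs_mul, abs_of_nonneg (by linarith : (0:ℝ) ≤ 1 - a)]
  have key : |∫ t, φ (lnmap 0 t)| ≤ (r - h) * (2 * s) := by
    have hmem : ∀ t : ℝ, lnmap 0 t ∈ ball x r → |t - x 0| < s := by
      intro t hmemb
      rw [mem_ball, dist_lnmap, hx] at hmemb
      have h1 : (t - x 0)^2 + (0 - h)^2 < r^2 := by
        have h2 : Real.sqrt ((t - x 0)^2 + (0 - h)^2) < r := hmemb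
        nlinarith [Real.sq_sqrt (by positivity : (0:ℝ) ≤ (t - x 0)^2 + (0 - h)^2),
          Real.sqrt_nonneg ((t - x 0)^2 + (0 - h)^2)]
      have h3 : (t - x 0)^2 < s^2 := by rw [hs2]; nlinarith
      refine lt_of_pow_lt_pow_left₀ 2 hs0 ?_
      rwa [sq_abs]
    have := abs_integral_le_of_support (A := x 0 - s) (B := x 0 + s) (M := r - h)
      (integrable_comp_lnmap 0 hlip.continuous hsupp) (by linarith)
      (fun t ht => by
        simp only [mem_Ioo]
        have hmemb : lnmap 0 t ∈ ball x r := hsupp ht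
        have := hmem t hmemb
        rw [abs_lt] at this
        exact ⟨by linarith [this.1], by linarith [this.2]⟩)
      (fun t _ => by
        by_cases hmemb : lnmap 0 t ∈ ball x r
        · have hd : dist (lnmap 0 t) x < r := mem_ball.mp hmemb
          have hdh : h ≤ dist (lnmap 0 t) x := by
            have := abs_le_dist_lnmap1 0 t x
            rw [hx, zero_sub, abs_neg, abs_of_pos hh] at this
            exact this
          have := phi_le_of_lipschitz hlip hsupp hd
          linarith
        · rw [phi_eq_zero_of_not_mem hsupp hmemb, abs_zero]; linarith)
    calc |∫ t, φ (lnmap 0 t)| ≤ (r - h) * ((x 0 + s) - (x 0 - s)) := this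
    _ = (r - h) * (2 * s) := by ring
  calc (1 - a) * |∫ t, φ (lnmap 0 t)| ≤ 1 * ((r - h) * (2 * s)) := by
        apply mul_le_mul (by linarith) key (abs_nonneg _) zero_le_one
  _ = (r - h) * (2 * s) := by ring


/-! ## alpha bounds -/

lemma alpha_bound_aux {d : ℕ} {μ : Measure E2} {x : E2} {r : ℝ} (hr : 0 < r)
    {M m0 : ℝ} (hM : 0 ≤ M) (hm0 : 0 < m0) (hm : m0 ≤ (μ (ball x r)).toReal)
    (hrec : alphaCoef d μ x r ≤ (1 / (r * (μ (ball x r)).toReal)) * M) :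
    alphaCoef d μ x r ≤ M / (r * m0) := by
  refine le_trans hrec ?_
  rw [one_div, inv_mul_eq_div]
  apply div_le_div_of_nonneg_left hM (by positivity)
  exact mul_le_mul_of_nonneg_left hm (le_of_lt hr)

lemma alpha_eq_zero_L {a h : ℝ} (ha0 : 0 ≤ a) (ha1 : a ≤ 1) (hh : 0 ≤ h) {x : E2} {r : ℝ}
    (hx : x 1 = 0) (hr : 0 < r) (hrh : r ≤ h) :
    alphaCoef 1 (mu1 a h) x r = 0 := by
  refine le_antisymm ?_ (alphaCoef_nonneg 1 (mu1 a h) x hr.le)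
  have h1 := alphaCoef_le (d := 1) (μ := mu1 a h) (x := x) (r := r) (1 - a) (lineSub 0)
    (by linarith) (isPlane_lineSub 0) hr.le
    (M := 0) (by simp only [Nat.cast_one]; exact FB_zero_L ha0 ha1 hh hx hrh)
  simpa using h1

lemma alpha_eq_zero_L' {a h : ℝ} (ha0 : 0 ≤ a) (ha1 : a ≤ 1) (hh : 0 < h) {x : E2} {r : ℝ}
    (hx : x 1 = h) (hr : 0 < r) (hrh : r ≤ h) :
    alphaCoef 1 (mu1 a h) x r = 0 := by
  refine le_antisymm ?_ (alphaCoef_nonneg 1 (mu1 a h) x hr.le)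
  have h1 := alphaCoef_le (d := 1) (μ := mu1 a h) (x := x) (r := r) a (lineSub h)
    ha0 (isPlane_lineSub h) hr.le
    (M := 0) (by simp only [Nat.cast_one]; exact FB_zero_L' ha0 ha1 hx hrh hh)
  simpa using h1

lemma alpha_le_L {a h : ℝ} (ha0 : 0 ≤ a) (ha1 : a ≤ 1/2) (hh : 0 ≤ h) {x : E2} {r : ℝ}
    (hx : x 1 = 0) (hr : 0 < r) :
    alphaCoef 1 (mu1 a h) x r ≤ 2 * a * h / r := by
  have h1 := alphaCoef_le (d := 1) (μ := mu1 a h) (x := x) (r := r) 1 (lineSub 0)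
    zero_le_one (isPlane_lineSub 0) hr.le
    (M := a * (h * (2 * r)))
    (by simp only [Nat.cast_one]; exact FB_trans ha0 (by linarith) hh hr)
  have hm : r ≤ ((mu1 a h) (ball x r)).toReal := by
    have := mu1_ball_toReal_ge0 (a := a) (h := h) x (r := r) (s := r) (by linarith)
      hr.le (by rw [hx]; ring_nf; exact le_refl _) hr.le
    nlinarith
  have h2 := alpha_bound_aux hr (by positivity) hr hm h1
  refine le_trans h2 ?_
  rw [div_le_div_iff₀ (by positivity) hr]
  ring_nf
  nlinarith [sq_nonneg r, hr]

lemma alpha_le_L'_trans {a h : ℝ} (ha0 : 0 ≤ a) (ha1 : a ≤ 1/2) (hh : 0 < h) {x : E2} {r : ℝ}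
    (hx : x 1 = h) (hhr : h < r) :
    alphaCoef 1 (mu1 a h) x r ≤ 2 * a * h / Real.sqrt (r^2 - h^2) := by
  have hr : 0 < r := lt_trans hh hhr
  set s := Real.sqrt (r^2 - h^2) with hsdef
  have hs0 : 0 < s := Real.sqrt_pos.mpr (by nlinarith)
  have hs2 : s^2 = r^2 - h^2 := Real.sq_sqrt (by nlinarith)
  have h1 := alphaCoef_le (d := 1) (μ := mu1 a h) (x := x) (r := r) 1 (lineSub 0)
    zero_le_one (isPlane_lineSub 0) hr.le
    (M := a * (h * (2 * r)))
    (by simp only [Nat.cast_one]; exact FB_trans ha0 (by linarith) hh.le hr)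
  have hm : s ≤ ((mu1 a h) (ball x r)).toReal := by
    have := mu1_ball_toReal_ge0 (a := a) (h := h) x (r := r) (s := s) (by linarith)
      hs0.le (by rw [hx]; nlinarith) hr.le
    nlinarith
  have h2 := alpha_bound_aux hr (by positivity) hs0 hm h1
  refine le_trans h2 ?_
  rw [div_le_div_iff₀ (by positivity) hs0]
  have : a * (h * (2 * r)) * s = (2 * a * h) * (r * s) := by ring
  rw [this]

lemma alpha_le_L'_small {a h : ℝ} (ha0 : 0 < a) (ha1 : a ≤ 1) (hh : 0 < h) {x : E2} {r : ℝ}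
    (hx : x 1 = h) (hhr : h < r) :
    alphaCoef 1 (mu1 a h) x r ≤ (r - h) * Real.sqrt (r^2 - h^2) / (a * r^2) := by
  have hr : 0 < r := lt_trans hh hhr
  set s := Real.sqrt (r^2 - h^2) with hsdef
  have hs0 : 0 < s := Real.sqrt_pos.mpr (by nlinarith)
  have h1 := alphaCoef_le (d := 1) (μ := mu1 a h) (x := x) (r := r) a (lineSub h)
    ha0.le (isPlane_lineSub h) hr.le
    (M := (r - h) * (2 * s))
    (by simp only [Nat.cast_one]; exact FB_small ha0.le ha1 hx hh hhr)
  have hm : a * (2 * r) ≤ ((mu1 a h) (ball x r)).toReal :=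
    mu1_ball_toReal_geh (a := a) (h := h) x (r := r) (s := r) ha0.le hr.le
      (by rw [hx]; ring_nf; exact le_refl _) hr.le
  have h2 := alpha_bound_aux hr (by nlinarith) (by positivity) hm h1
  refine le_trans h2 ?_
  rw [div_le_div_iff₀ (by positivity) (by positivity)]
  ring_nf
  nlinarith [sq_nonneg r, mul_pos hr hs0]


/-! ## lintegral computations -/

lemma lint_tail (K c : ℝ) (hK : 0 ≤ K) (hc : 0 < c) :
    (∫⁻ r in Ioi c, ENNReal.ofReal (K * r^(-3:ℝ)))
      = ENNReal.ofReal (K * (c^(-2:ℝ)/2)) := by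
  have hint : IntegrableOn (fun r : ℝ => K * r^(-3:ℝ)) (Ioi c) :=
    (integrableOn_Ioi_rpow_of_lt (by norm_num) hc).const_mul K
  rw [← ofReal_integral_eq_lintegral_ofReal hint
    ((ae_restrict_iff' measurableSet_Ioi).mpr (ae_of_all _ fun r hr => by
      have : (0:ℝ) < r := lt_trans hc hr
      positivity))]
  congr 1
  rw [MeasureTheory.integral_const_mul, integral_Ioi_rpow_of_lt (by norm_num) hc]
  norm_num

lemma lint_Ioi_zero_piece {F : ℝ → ℝ≥0∞} {A B : ℝ}
    (hz : ∀ r ∈ Ioc A B, F r = 0) : (∫⁻ r in Ioc A B, F r) = 0 := by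
  have : (∫⁻ r in Ioc A B, F r) ≤ ∫⁻ _ in Ioc A B, 0 :=
    lintegral_mono_ae ((ae_restrict_iff' measurableSet_Ioc).mpr
      (ae_of_all _ fun r hr => le_of_eq (hz r hr)))
  simpa using this

/-- Jones-function bound at points of the heavy line. -/
lemma jones_L {a h : ℝ} (ha0 : 0 < a) (ha2 : a ≤ 1/2) (hh : 0 < h) {x : E2}
    (hx : x 1 = 0) :
    (∫⁻ r in Ioi (0:ℝ), ENNReal.ofReal (alphaCoef 1 (mu1 a h) x r ^ 2 / r))
      ≤ ENNReal.ofReal (2 * a^2) := by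
  set F : ℝ → ℝ≥0∞ := fun r => ENNReal.ofReal (alphaCoef 1 (mu1 a h) x r ^ 2 / r) with hF
  have hsplit : Ioi (0:ℝ) = Ioc 0 h ∪ Ioi h := (Ioc_union_Ioi_eq_Ioi hh.le).symm
  calc (∫⁻ r in Ioi (0:ℝ), F r) = ∫⁻ r in Ioc 0 h ∪ Ioi h, F r := by rw [hsplit]
  _ ≤ (∫⁻ r in Ioc 0 h, F r) + ∫⁻ r in Ioi h, F r := lintegral_union_le _ _ _
  _ ≤ 0 + ENNReal.ofReal (2 * a^2) := by
      gcongr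
      · refine le_of_eq (lint_Ioi_zero_piece fun r hr => ?_)
        show ENNReal.ofReal (alphaCoef 1 (mu1 a h) x r ^ 2 / r) = 0
        rw [alpha_eq_zero_L ha0.le (by linarith) hh.le hx hr.1 hr.2]
        norm_num
      · have hbd : ∀ r ∈ Ioi h, F r ≤ ENNReal.ofReal ((4*a^2*h^2) * r^(-3:ℝ)) := by
          intro r hr
          rw [mem_Ioi] at hr
          have hr0 : 0 < r := lt_trans hh hr
          apply ENNReal.ofReal_le_ofReal
          have hα := alpha_le_L ha0.le ha2 hh.le hx hr0
          have hα0 := alphaCoef_nonneg 1 (mu1 a h) x hr0.le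
          have hsq : alphaCoef 1 (mu1 a h) x r ^ 2 ≤ (2*a*h/r)^2 :=
            pow_le_pow_left₀ hα0 hα 2
          have hrpow : r ^ (-3:ℝ) = (r^3)⁻¹ := by
            rw [show (-3:ℝ) = -(3:ℕ) by norm_num, Real.rpow_neg hr0.le, Real.rpow_natCast]
          rw [hrpow]
          rw [div_le_iff₀ hr0] at *
          calc alphaCoef 1 (mu1 a h) x r ^ 2 ≤ (2*a*h/r)^2 := hsq
          _ = 4*a^2*h^2 * (r^3)⁻¹ * r := by field_simp; ring
        calc (∫⁻ r in Ioi h, F r) ≤ ∫⁻ r in Ioi h, ENNReal.ofReal ((4*a^2*h^2) * r^(-3:ℝ)) :=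
              lintegral_mono_ae ((ae_restrict_iff' measurableSet_Ioi).mpr (ae_of_all _ hbd))
        _ = ENNReal.ofReal ((4*a^2*h^2) * (h^(-2:ℝ)/2)) := lint_tail _ _ (by positivity) hh
        _ = ENNReal.ofReal (2*a^2) := by
              congr 1
              have : h ^ (-2:ℝ) = (h^2)⁻¹ := by
                rw [show (-2:ℝ) = -(2:ℕ) by norm_num, Real.rpow_neg hh.le, Real.rpow_natCast]
              rw [this]
              field_simp
              ring
  _ = ENNReal.ofReal (2 * a^2) := by rw [zero_add]


set_option maxHeartbeats 2000000 in
/-- Jones-function bound at points of the light line. -/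
lemma jones_L' {a h : ℝ} (ha0 : 0 < a) (ha2 : a ≤ 1/2) (hh : 0 < h) {x : E2}
    (hx : x 1 = h) :
    (∫⁻ r in Ioi (0:ℝ), ENNReal.ofReal (alphaCoef 1 (mu1 a h) x r ^ 2 / r))
      ≤ ENNReal.ofReal ((3/2) * a^2 + 2 * a^2 * Real.log (1/a)) := by
  set F : ℝ → ℝ≥0∞ := fun r => ENNReal.ofReal (alphaCoef 1 (mu1 a h) x r ^ 2 / r) with hF
  have hB2 : h < h + a*h := lt_add_of_pos_right _ (mul_pos ha0 hh)
  have hB23 : h + a*h ≤ 2*h := by nlinarith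
  have hlog0 : 0 ≤ Real.log (1/a) := Real.log_nonneg (by rw [le_div_iff₀ ha0]; linarith)
  -- Piece 1 : (0, h]
  have hP1 : (∫⁻ r in Ioc (0:ℝ) h, F r) = 0 := by
    refine lint_Ioi_zero_piece fun r hr => ?_
    show ENNReal.ofReal (alphaCoef 1 (mu1 a h) x r ^ 2 / r) = 0
    rw [alpha_eq_zero_L' ha0.le (by linarith) hh hx hr.1 hr.2]
    norm_num
  -- Piece 2 : (h, h + a h]
  have hP2 : (∫⁻ r in Ioc h (h + a*h), F r) ≤ ENNReal.ofReal ((3/4) * a^2) := by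
    have hbd : ∀ r ∈ Ioc h (h + a*h), F r ≤
        ENNReal.ofReal ((3/(a^2*h^4)) * (r - h)^3) := by
      intro r hr
      obtain ⟨hr1, hr2⟩ := hr
      have hr0 : 0 < r := lt_trans hh hr1
      have hr2h : r ≤ 2*h := le_trans hr2 hB23
      apply ENNReal.ofReal_le_ofReal
      set s := Real.sqrt (r^2 - h^2) with hsdef
      have hs0 : 0 ≤ s := Real.sqrt_nonneg _
      have hs2 : s^2 = r^2 - h^2 := Real.sq_sqrt (by nlinarith)
      have hα := alpha_le_L'_small ha0 (by linarith) hh hx hr1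
      have hα0 := alphaCoef_nonneg 1 (mu1 a h) x hr0.le
      have hsq : alphaCoef 1 (mu1 a h) x r ^ 2 ≤ ((r-h)*s/(a*r^2))^2 :=
        pow_le_pow_left₀ hα0 hα 2
      have hb2 : ((r-h)*s/(a*r^2))^2 = (r-h)^2*(r^2-h^2)/(a^2*r^4) := by
        rw [div_pow, mul_pow, hs2]
        congr 1
        ring
      rw [hb2] at hsq
      have hstep : alphaCoef 1 (mu1 a h) x r ^ 2 / r
          ≤ ((r-h)^2*(r^2-h^2)/(a^2*r^4)) / r :=
        (div_le_div_iff_of_pos_right hr0).mpr hsq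
      refine le_trans hstep ?_
      have hRHS : 3/(a^2*h^4)*(r-h)^3 = 3*(r-h)^3/(a^2*h^4) := by ring
      rw [hRHS, div_div, div_le_div_iff₀ (by positivity) (by positivity)]
      have h5 : h^5 ≤ r^5 := pow_le_pow_left₀ hh.le hr1.le 5
      have hrh3 : r + h ≤ 3*h := by linarith
      have t3 : (0:ℝ) ≤ (r-h)^3 := pow_nonneg (by linarith) 3
      have key : (r-h)^2*(r^2-h^2)*h^4 ≤ 3*(r-h)^3*r^5 := by
        have e1 : (r-h)^2*(r^2-h^2)*h^4 = (r-h)^3*((r+h)*h^4) := by ring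
        have e2 : (r+h)*h^4 ≤ 3*r^5 := by
          have f1 : (r+h)*h^4 ≤ 3*h*h^4 :=
            mul_le_mul_of_nonneg_right hrh3 (by positivity)
          have f2 : 3*h*h^4 = 3*h^5 := by ring
          linarith
        calc (r-h)^2*(r^2-h^2)*h^4 = (r-h)^3*((r+h)*h^4) := e1
        _ ≤ (r-h)^3*(3*r^5) := mul_le_mul_of_nonneg_left e2 t3
        _ = 3*(r-h)^3*r^5 := by ring
      have := mul_le_mul_of_nonneg_left key (sq_nonneg a)
      nlinarith [this]
    have hg2 : (∫⁻ r in Ioc h (h + a*h), ENNReal.ofReal ((3/(a^2*h^4)) * (r - h)^3))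
        = ENNReal.ofReal ((3/4) * a^2) := by
      have hcont : Continuous (fun r : ℝ => (3/(a^2*h^4)) * (r - h)^3) := by
        continuity
      have hint : IntegrableOn (fun r : ℝ => (3/(a^2*h^4)) * (r - h)^3) (Ioc h (h + a*h)) :=
        hcont.integrableOn_Ioc
      rw [← ofReal_integral_eq_lintegral_ofReal hint
        ((ae_restrict_iff' measurableSet_Ioc).mpr (ae_of_all _ fun r hr => by
          have : (0:ℝ) ≤ r - h := by linarith [hr.1.le]
          positivity))]
      congr 1
      rw [← intervalIntegral.integral_of_le hB2.le, intervalIntegral.integral_const_mul,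
        intervalIntegral.integral_comp_sub_right (f := fun u => u^3) h]
      rw [show h - h = (0:ℝ) by ring, show h + a*h - h = a*h by ring,
        _root_.integral_pow]
      field_simp
      ring
    exact le_of_le_of_eq (lintegral_mono_ae
      ((ae_restrict_iff' measurableSet_Ioc).mpr (ae_of_all _ hbd))) hg2
  -- Piece 3 : (h + a h, 2h]
  have hP3 : (∫⁻ r in Ioc (h + a*h) (2*h), F r)
      ≤ ENNReal.ofReal (2 * a^2 * Real.log (1/a)) := by
    have hbd : ∀ r ∈ Ioc (h + a*h) (2*h), F r ≤
        ENNReal.ofReal ((2*a^2) * (r - h)⁻¹) := by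
      intro r hr
      obtain ⟨hr1, hr2⟩ := hr
      have hrh : h < r := lt_trans hB2 hr1
      have hr0 : 0 < r := lt_trans hh hrh
      apply ENNReal.ofReal_le_ofReal
      set s := Real.sqrt (r^2 - h^2) with hsdef
      have hs0 : 0 < s := Real.sqrt_pos.mpr (by nlinarith)
      have hs2 : s^2 = r^2 - h^2 := Real.sq_sqrt (by nlinarith)
      have hα := alpha_le_L'_trans ha0.le ha2 hh hx hrh
      have hα0 := alphaCoef_nonneg 1 (mu1 a h) x hr0.le
      have hsq : alphaCoef 1 (mu1 a h) x r ^ 2 ≤ (2*a*h/s)^2 :=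
        pow_le_pow_left₀ hα0 hα 2
      have hb2 : (2*a*h/s)^2 = 4*a^2*h^2/(r^2-h^2) := by
        rw [div_pow, hs2]
        congr 1
        ring
      rw [hb2] at hsq
      have hstep : alphaCoef 1 (mu1 a h) x r ^ 2 / r
          ≤ (4*a^2*h^2/(r^2-h^2)) / r :=
        (div_le_div_iff_of_pos_right hr0).mpr hsq
      refine le_trans hstep ?_
      have hRHS : (2*a^2) * (r-h)⁻¹ = 2*a^2/(r-h) := by ring
      rw [hRHS, div_div, div_le_div_iff₀ (mul_pos (show (0:ℝ) < r^2-h^2 by nlinarith) hr0) (show (0:ℝ) < r - h by linarith)]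
      have k1 : 2*h^2 ≤ (r+h)*r := by nlinarith
      nlinarith [mul_le_mul_of_nonneg_left k1
        (mul_nonneg (mul_nonneg (by norm_num : (0:ℝ) ≤ 2) (sq_nonneg a))
          (by linarith : (0:ℝ) ≤ r - h))]
    have hg3 : (∫⁻ r in Ioc (h + a*h) (2*h), ENNReal.ofReal ((2*a^2) * (r - h)⁻¹))
        = ENNReal.ofReal (2 * a^2 * Real.log (1/a)) := by
      have hcont : ContinuousOn (fun r : ℝ => (2*a^2) * (r - h)⁻¹) (Icc (h + a*h) (2*h)) := by
        apply ContinuousOn.mul continuousOn_const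
        apply ContinuousOn.inv₀ (by fun_prop)
        intro r hr
        have := hr.1
        intro hzero
        nlinarith [sub_eq_zero.mp hzero]
      have hint : IntegrableOn (fun r : ℝ => (2*a^2) * (r - h)⁻¹) (Ioc (h + a*h) (2*h)) :=
        (hcont.integrableOn_compact isCompact_Icc).mono_set Ioc_subset_Icc_self
      rw [← ofReal_integral_eq_lintegral_ofReal hint
        ((ae_restrict_iff' measurableSet_Ioc).mpr (ae_of_all _ fun r hr => by
          have : (0:ℝ) < r - h := by linarith [lt_trans hB2 hr.1]
          positivity))]
      congr 1
      rw [← intervalIntegral.integral_of_le hB23, intervalIntegral.integral_const_mul,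
        intervalIntegral.integral_comp_sub_right (f := fun u => u⁻¹) h]
      rw [show h + a*h - h = a*h by ring, show 2*h - h = h by ring]
      rw [_root_.integral_inv (by
        intro hmem
        rcases Set.mem_uIcc.mp hmem with ⟨h1, _⟩ | ⟨h1, _⟩
        · nlinarith
        · nlinarith)]
      rw [show h / (a*h) = 1/a by field_simp]
    exact le_of_le_of_eq (lintegral_mono_ae
      ((ae_restrict_iff' measurableSet_Ioc).mpr (ae_of_all _ hbd))) hg3
  -- Piece 4 : (2h, ∞)
  have hP4 : (∫⁻ r in Ioi (2*h), F r) ≤ ENNReal.ofReal ((3/4) * a^2) := by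
    have hbd : ∀ r ∈ Ioi (2*h), F r ≤
        ENNReal.ofReal ((6*a^2*h^2) * r^(-3:ℝ)) := by
      intro r hr
      rw [mem_Ioi] at hr
      have hrh : h < r := by linarith
      have hr0 : 0 < r := lt_trans hh hrh
      apply ENNReal.ofReal_le_ofReal
      set s := Real.sqrt (r^2 - h^2) with hsdef
      have hs0 : 0 < s := Real.sqrt_pos.mpr (by nlinarith)
      have hs2 : s^2 = r^2 - h^2 := Real.sq_sqrt (by nlinarith)
      have hα := alpha_le_L'_trans ha0.le ha2 hh hx hrh
      have hα0 := alphaCoef_nonneg 1 (mu1 a h) x hr0.le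
      have hsq : alphaCoef 1 (mu1 a h) x r ^ 2 ≤ (2*a*h/s)^2 :=
        pow_le_pow_left₀ hα0 hα 2
      have hb2 : (2*a*h/s)^2 = 4*a^2*h^2/(r^2-h^2) := by
        rw [div_pow, hs2]
        congr 1
        ring
      rw [hb2] at hsq
      have hstep : alphaCoef 1 (mu1 a h) x r ^ 2 / r
          ≤ (4*a^2*h^2/(r^2-h^2)) / r :=
        (div_le_div_iff_of_pos_right hr0).mpr hsq
      refine le_trans hstep ?_
      have hrpow : r ^ (-3:ℝ) = (r^3)⁻¹ := by
        rw [show (-3:ℝ) = -(3:ℕ) by norm_num, Real.rpow_neg hr0.le, Real.rpow_natCast]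
      rw [hrpow, div_div, ← div_eq_mul_inv,
        div_le_div_iff₀ (mul_pos (show (0:ℝ) < r^2-h^2 by nlinarith) hr0) (show (0:ℝ) < r^3 by positivity)]
      have k2 : (0:ℝ) ≤ r^2 - 4*h^2 := by nlinarith
      have k3 : (0:ℝ) ≤ r^3 - 4*h^2*r := by nlinarith [mul_nonneg k2 hr0.le]
      nlinarith [mul_nonneg (mul_nonneg (sq_nonneg a) (sq_nonneg h)) k3,
        mul_nonneg (mul_nonneg (sq_nonneg a) (sq_nonneg h)) (pow_nonneg hr0.le 3)]
    have hg4 : (∫⁻ r in Ioi (2*h), ENNReal.ofReal ((6*a^2*h^2) * r^(-3:ℝ)))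
        = ENNReal.ofReal ((3/4) * a^2) := by
      rw [lint_tail _ _ (by positivity) (by linarith)]
      congr 1
      have : (2*h) ^ (-2:ℝ) = ((2*h)^2)⁻¹ := by
        rw [show (-2:ℝ) = -(2:ℕ) by norm_num, Real.rpow_neg (by linarith), Real.rpow_natCast]
      rw [this]
      field_simp
      ring
    exact le_of_le_of_eq (lintegral_mono_ae
      ((ae_restrict_iff' measurableSet_Ioi).mpr (ae_of_all _ hbd))) hg4
  -- Assemble
  have hsplit1 : Ioi (0:ℝ) = Ioc 0 h ∪ Ioi h := (Ioc_union_Ioi_eq_Ioi hh.le).symm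
  have hsplit2 : Ioi h = Ioc h (h + a*h) ∪ Ioi (h + a*h) := (Ioc_union_Ioi_eq_Ioi hB2.le).symm
  have hsplit3 : Ioi (h + a*h) = Ioc (h + a*h) (2*h) ∪ Ioi (2*h) :=
    (Ioc_union_Ioi_eq_Ioi hB23).symm
  calc (∫⁻ r in Ioi (0:ℝ), F r) = ∫⁻ r in Ioc 0 h ∪ Ioi h, F r := by rw [← hsplit1]
  _ ≤ (∫⁻ r in Ioc (0:ℝ) h, F r) + ∫⁻ r in Ioi h, F r := lintegral_union_le _ _ _
  _ = ∫⁻ r in Ioi h, F r := by rw [hP1, zero_add]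
  _ = ∫⁻ r in Ioc h (h + a*h) ∪ Ioi (h + a*h), F r := by rw [← hsplit2]
  _ ≤ (∫⁻ r in Ioc h (h + a*h), F r) + ∫⁻ r in Ioi (h + a*h), F r := lintegral_union_le _ _ _
  _ ≤ ENNReal.ofReal ((3/4) * a^2) + ∫⁻ r in Ioc (h + a*h) (2*h) ∪ Ioi (2*h), F r := by
      rw [← hsplit3]; exact add_le_add hP2 le_rfl
  _ ≤ ENNReal.ofReal ((3/4) * a^2) +
      ((∫⁻ r in Ioc (h + a*h) (2*h), F r) + ∫⁻ r in Ioi (2*h), F r) :=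
      add_le_add le_rfl (lintegral_union_le _ _ _)
  _ ≤ ENNReal.ofReal ((3/4) * a^2) +
      (ENNReal.ofReal (2 * a^2 * Real.log (1/a)) + ENNReal.ofReal ((3/4) * a^2)) :=
      add_le_add le_rfl (add_le_add hP3 hP4)
  _ = ENNReal.ofReal ((3/2) * a^2 + 2 * a^2 * Real.log (1/a)) := by
      rw [← ENNReal.ofReal_add (by positivity) (by positivity),
        ← ENNReal.ofReal_add (by positivity) (by positivity)]
      congr 1
      ring


/-- For `μ₁ = (1−a)·H¹|_L + a·H¹|_{L(h)}` with `0 < a ≤ 1/2`, the `α`-Jones function of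
`μ₁` at any point of `L ∪ L(h)` is at most `C·a²·log(1/a)`. -/
theorem statement15 :
    ∃ C : ℝ, 0 < C ∧
      ∀ (h : ℝ), 0 < h → ∀ (a : ℝ), 0 < a → a ≤ 1/2 →
      ∀ (L L' : Set (EuclideanSpace ℝ (Fin 2))),
        L = {p : EuclideanSpace ℝ (Fin 2) | p 1 = 0} →
        L' = {p : EuclideanSpace ℝ (Fin 2) | p 1 = h} →
      ∀ μ₁ : Measure (EuclideanSpace ℝ (Fin 2)),
        μ₁ = ENNReal.ofReal (1 - a) • (μH[(1:ℝ)]).restrict L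
            + ENNReal.ofReal a • (μH[(1:ℝ)]).restrict L' →
      ∀ x ∈ L ∪ L',
        (∫⁻ r in Ioi (0:ℝ), ENNReal.ofReal (alphaCoef 1 μ₁ x r ^ 2 / r)) ≤
          ENNReal.ofReal (C * a ^ 2 * Real.log (1 / a)) := by
  refine ⟨5, by norm_num, ?_⟩
  intro h hh a ha0 ha2 L L' hL hL' μ₁ hμ x hx
  subst hL hL' hμ
  have hmu : (ENNReal.ofReal (1 - a) • (μH[(1:ℝ)] : Measure E2).restrict
        {p : EuclideanSpace ℝ (Fin 2) | p 1 = 0}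
      + ENNReal.ofReal a • (μH[(1:ℝ)] : Measure E2).restrict
        {p : EuclideanSpace ℝ (Fin 2) | p 1 = h}) = mu1 a h := rfl
  rw [hmu]
  have hpos5 : (0:ℝ) ≤ 5*a^2 := by positivity
  have hlog2 : Real.log 2 ≤ Real.log (1/a) :=
    Real.log_le_log (by norm_num) (by rw [le_div_iff₀ ha0]; linarith)
  have k1 := mul_le_mul_of_nonneg_left hlog2 hpos5
  have k2 := mul_le_mul_of_nonneg_left (le_of_lt Real.log_two_gt_d9) hpos5
  have hsq : (0:ℝ) ≤ a^2 := sq_nonneg a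
  rcases hx with hx | hx
  · refine le_trans (jones_L ha0 ha2 hh hx) (ENNReal.ofReal_le_ofReal ?_)
    nlinarith [k1, k2, hsq]
  · refine le_trans (jones_L' ha0 ha2 hh hx) (ENNReal.ofReal_le_ofReal ?_)
    have hlog0 : 0 ≤ Real.log (1/a) :=
      Real.log_nonneg (by rw [le_div_iff₀ ha0]; linarith)
    nlinarith [k1, k2, hsq, mul_nonneg hsq hlog0]

end
end

section
/- Let μ be a Radon measure on ℝⁿ, v ∈ ℝⁿ, and 0 ≤ a ≤ 1. Let τ_v[μ] denote the pushforward of μ under the translation y ↦ y + v, and set ν := (1−a)·μ + a·τ_v[μ]. Then for every x ∈ ℝⁿ and r > 0, F_{B(x,r)}(μ, ν) ≤ a·|v|·μ(B(x, r + |v|)). -/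
open MeasureTheory Metric Set
open scoped ENNReal NNReal

noncomputable section

/-- If `ν = (1−a)·μ + a·τ_v[μ]` is a convex combination of `μ` with its translate by `v`,
then `F_{B(x,r)}(μ,ν) ≤ a·|v|·μ(B(x,r+|v|))`. -/
theorem statement17 (n : ℕ) (μ : Measure (EuclideanSpace ℝ (Fin n)))
    [IsLocallyFiniteMeasure μ]
    (v : EuclideanSpace ℝ (Fin n)) (a : ℝ) (ha0 : 0 ≤ a) (ha1 : a ≤ 1)
    (ν : Measure (EuclideanSpace ℝ (Fin n)))
    (hν : ν = ENNReal.ofReal (1 - a) • μ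
        + ENNReal.ofReal a • Measure.map (fun y => y + v) μ)
    (x : EuclideanSpace ℝ (Fin n)) (r : ℝ) (hr : 0 < r) :
    FB (ball x r) μ ν ≤ a * ‖v‖ * (μ (ball x (r + ‖v‖))).toReal := by
  have hμS : μ (ball x (r + ‖v‖)) < ∞ := measure_ball_lt_top
  apply Real.sSup_le
  · rintro t ⟨φ, hlip, hsupp, rfl⟩
    have hφc : Continuous φ := hlip.continuous
    have hφ0 : ∀ y, y ∉ ball x r → φ y = 0 := by
      intro y hy
      by_contra h
      exact hy (hsupp h)
    have hcs : HasCompactSupport φ :=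
      HasCompactSupport.intro (isCompact_closedBall x r) fun y hy =>
        hφ0 y (fun h => hy (ball_subset_closedBall h))
    have int1 : Integrable φ μ := hφc.integrable_of_hasCompactSupport hcs
    have hcs2 : HasCompactSupport (fun y => φ (y + v)) :=
      hcs.comp_homeomorph (Homeomorph.addRight v)
    have int2 : Integrable (fun y => φ (y + v)) μ :=
      (hφc.comp (continuous_id.add continuous_const)).integrable_of_hasCompactSupport hcs2
    have hemb : MeasurableEmbedding (fun y : EuclideanSpace ℝ (Fin n) => y + v) :=
      (MeasurableEquiv.addRight v).measurableEmbedding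
    have hmap : ∫ y, φ y ∂(Measure.map (fun y => y + v) μ) = ∫ y, φ (y + v) ∂μ :=
      hemb.integral_map φ
    have intm : Integrable φ (Measure.map (fun y => y + v) μ) :=
      (hemb.integrable_map_iff).2 int2
    have hν' : ∫ y, φ y ∂ν = (1 - a) * ∫ y, φ y ∂μ + a * ∫ y, φ (y + v) ∂μ := by
      rw [hν, integral_add_measure (int1.smul_measure ENNReal.ofReal_ne_top)
        (intm.smul_measure ENNReal.ofReal_ne_top), integral_smul_measure,
        integral_smul_measure, hmap, ENNReal.toReal_ofReal (by linarith),
        ENNReal.toReal_ofReal ha0]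
      simp only [smul_eq_mul]
    set S := ball x (r + ‖v‖) with hS
    set g : EuclideanSpace ℝ (Fin n) → ℝ := fun y => φ y - φ (y + v) with hg
    have hkey : (∫ y, φ y ∂μ) - (∫ y, φ y ∂ν) = a * ∫ y, g y ∂μ := by
      rw [hν', integral_sub int1 int2]
      ring
    have hgS : ∀ y, y ∉ S → g y = 0 := by
      intro y hy
      have hd : r + ‖v‖ ≤ dist y x := by
        by_contra h
        exact hy (mem_ball.2 (lt_of_not_ge h))
      have h1 : φ y = 0 := hφ0 y (by
        simp only [mem_ball, not_lt]
        have : (0:ℝ) ≤ ‖v‖ := norm_nonneg v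
        linarith)
      have h2 : φ (y + v) = 0 := hφ0 (y + v) (by
        simp only [mem_ball, not_lt]
        have hdv : dist y (y + v) = ‖v‖ := by
          rw [dist_eq_norm]
          simp
        have := dist_triangle y (y + v) x
        linarith)
      simp [hg, h1, h2]
    have hgind : g = S.indicator g := by
      funext y
      by_cases hy : y ∈ S
      · rw [Set.indicator_of_mem hy]
      · rw [Set.indicator_of_notMem hy, hgS y hy]
    have hbound : ∀ y ∈ S, ‖g y‖ ≤ ‖v‖ := by
      intro y _
      have := hlip.dist_le_mul y (y + v)
      have hdv : dist y (y + v) = ‖v‖ := by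
        rw [dist_eq_norm]; simp
      simpa [Real.dist_eq, hg, hdv] using this
    have hInt : |∫ y, g y ∂μ| ≤ ‖v‖ * (μ S).toReal := by
      have : ∫ y, g y ∂μ = ∫ y in S, g y ∂μ := by
        conv_lhs => rw [hgind]
        rw [integral_indicator measurableSet_ball]
      rw [this]
      exact norm_setIntegral_le_of_norm_le_const hμS hbound
    calc |(∫ y, φ y ∂μ) - (∫ y, φ y ∂ν)| = a * |∫ y, g y ∂μ| := by
          rw [hkey, abs_mul, abs_of_nonneg ha0]
      _ ≤ a * (‖v‖ * (μ S).toReal) := mul_le_mul_of_nonneg_left hInt ha0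
      _ = a * ‖v‖ * (μ S).toReal := by ring
  · positivity

end
end

section
/- Let L be an affine line in ℝ², x ∈ ℝ², r > 0 and h > 0. Then the length of the intersection of L with the closed annulus of center x and radii r and r+2h satisfies H¹(L ∩ (B̄(x,r+2h) \ B(x,r))) ≤ 2·√(4hr + 4h²). -/
open MeasureTheory Metric Set
open scoped ENNReal NNReal

noncomputable section

/-- The length of the intersection of an affine line in `ℝ²` with the closed annulus of
center `x` and radii `r` and `r+2h` is at most `2·√(4hr + 4h²)`. -/
theorem statement19 (L : AffineSubspace ℝ (EuclideanSpace ℝ (Fin 2)))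
    (hL : (L : Set (EuclideanSpace ℝ (Fin 2))).Nonempty ∧
      Module.finrank ℝ L.direction = 1)
    (x : EuclideanSpace ℝ (Fin 2)) (r h : ℝ) (hr : 0 < r) (hh : 0 < h) :
    μH[(1:ℝ)] ((L : Set (EuclideanSpace ℝ (Fin 2))) ∩
        (closedBall x (r + 2 * h) \ ball x r)) ≤
      ENNReal.ofReal (2 * Real.sqrt (4 * h * r + 4 * h ^ 2)) := by
  obtain ⟨⟨p, hp⟩, hdim⟩ := hL
  obtain ⟨v, hv0, hvspan⟩ := finrank_eq_one_iff'.mp hdim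
  have hv0' : (v : EuclideanSpace ℝ (Fin 2)) ≠ 0 := fun hc => hv0 (Subtype.ext hc)
  have hnv : ‖(v : EuclideanSpace ℝ (Fin 2))‖ ≠ 0 := norm_ne_zero_iff.mpr hv0'
  set u : EuclideanSpace ℝ (Fin 2) := ‖(v : EuclideanSpace ℝ (Fin 2))‖⁻¹ • (v : EuclideanSpace ℝ (Fin 2)) with hu_def
  have hu : ‖u‖ = 1 := by
    rw [hu_def, norm_smul]
    simp [hnv]
  have humem : u ∈ L.direction := L.direction.smul_mem _ v.2
  set f : ℝ → EuclideanSpace ℝ (Fin 2) := fun t => t • u + p with hf_def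
  -- L is the range of f
  have hLf : (L : Set (EuclideanSpace ℝ (Fin 2))) = Set.range f := by
    ext y
    constructor
    · intro hy
      have hy' : y - p ∈ L.direction := AffineSubspace.vsub_mem_direction hy hp
      obtain ⟨c, hc⟩ := hvspan ⟨y - p, hy'⟩
      have hc' : c • (v : EuclideanSpace ℝ (Fin 2)) = y - p := congrArg Subtype.val hc
      refine ⟨c * ‖(v : EuclideanSpace ℝ (Fin 2))‖, ?_⟩
      simp only [hf_def, hu_def, smul_smul]
      rw [mul_assoc, mul_inv_cancel₀ hnv, mul_one, hc']
      abel
    · rintro ⟨t, rfl⟩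
      exact AffineSubspace.vadd_mem_of_mem_direction (L.direction.smul_mem t humem) hp
  have hf_isom : Isometry f := by
    apply Isometry.of_dist_eq
    intro t s
    simp only [hf_def, dist_eq_norm]
    rw [show t • u + p - (s • u + p) = (t - s) • u by module, norm_smul, hu]
    simp [Real.dist_eq]
  set R := r + 2 * h with hR
  set A : Set (EuclideanSpace ℝ (Fin 2)) := closedBall x (r + 2 * h) \ ball x r with hA
  have hinter : (L : Set (EuclideanSpace ℝ (Fin 2))) ∩ A = f '' (f ⁻¹' A) := by
    rw [Set.image_preimage_eq_inter_range, hLf, Set.inter_comm]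
  rw [hinter]
  rw [hf_isom.hausdorffMeasure_image (Or.inl zero_le_one), MeasureTheory.hausdorffMeasure_real]
  -- Geometry on ℝ
  set w : EuclideanSpace ℝ (Fin 2) := x - p with hw
  set a : ℝ := inner ℝ w u with ha
  set d2 : ℝ := ‖w‖ ^ 2 - a ^ 2 with hd2
  have hd2nn : 0 ≤ d2 := by
    have h1 : |a| ≤ ‖w‖ * ‖u‖ := abs_real_inner_le_norm w u
    rw [hu, mul_one] at h1
    have := abs_nonneg a
    nlinarith [sq_abs a]
  have hdist : ∀ t : ℝ, dist (f t) x ^ 2 = (t - a) ^ 2 + d2 := by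
    intro t
    have : f t - x = t • u - w := by simp only [hf_def, hw]; abel
    rw [dist_eq_norm, this, norm_sub_sq_real, norm_smul, hu, real_inner_smul_left]
    have : (inner ℝ u w : ℝ) = a := by rw [ha, real_inner_comm]
    rw [this]
    simp [Real.norm_eq_abs, mul_pow, sq_abs, hd2]
    ring
  set s' : ℝ := Real.sqrt (max (r ^ 2 - d2) 0) with hs'
  set S : ℝ := Real.sqrt (max (R ^ 2 - d2) 0) with hS
  have hs'nn : 0 ≤ s' := Real.sqrt_nonneg _
  have hSnn : 0 ≤ S := Real.sqrt_nonneg _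
  have hrR : r ≤ R := by rw [hR]; linarith
  have hs'S : s' ≤ S := by
    apply Real.sqrt_le_sqrt
    apply max_le_max _ le_rfl
    nlinarith
  have hsub : f ⁻¹' A ⊆ Icc (a - S) (a - s') ∪ Icc (a + s') (a + S) := by
    intro t ht
    obtain ⟨ht1, ht2⟩ := ht
    rw [mem_closedBall] at ht1
    rw [mem_ball, not_lt] at ht2
    have hRnn : 0 ≤ R := le_trans hr.le hrR
    have hsq1 : dist (f t) x ^ 2 ≤ R ^ 2 := by
      have := pow_le_pow_left₀ dist_nonneg ht1 2
      simpa [hR] using this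
    have hsq2 : r ^ 2 ≤ dist (f t) x ^ 2 := pow_le_pow_left₀ hr.le ht2 2
    rw [hdist t] at hsq1 hsq2
    have h1 : |t - a| ≤ S := by
      rw [hS, ← Real.sqrt_sq_eq_abs]
      apply Real.sqrt_le_sqrt
      exact le_max_of_le_left (by linarith)
    have h2 : s' ≤ |t - a| := by
      rw [hs', ← Real.sqrt_sq_eq_abs]
      apply Real.sqrt_le_sqrt
      exact max_le (by linarith) (sq_nonneg _)
    rcases le_or_gt a t with hta | hta
    · right
      rw [abs_of_nonneg (by linarith)] at h1 h2
      constructor <;> linarith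
    · left
      rw [abs_of_neg (by linarith)] at h1 h2
      constructor <;> linarith
  calc volume (f ⁻¹' A) ≤ volume (Icc (a - S) (a - s') ∪ Icc (a + s') (a + S)) :=
        measure_mono hsub
    _ ≤ volume (Icc (a - S) (a - s')) + volume (Icc (a + s') (a + S)) := measure_union_le _ _
    _ = ENNReal.ofReal (S - s') + ENNReal.ofReal (S - s') := by
        rw [Real.volume_Icc, Real.volume_Icc]
        congr 1 <;> ring_nf
    _ = ENNReal.ofReal (2 * (S - s')) := by
        rw [← ENNReal.ofReal_add (by linarith) (by linarith)]; ring_nf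
    _ ≤ ENNReal.ofReal (2 * Real.sqrt (4 * h * r + 4 * h ^ 2)) := by
        apply ENNReal.ofReal_le_ofReal
        have key : S - s' ≤ Real.sqrt (4 * h * r + 4 * h ^ 2) := by
          have hS2 : S ^ 2 = max (R ^ 2 - d2) 0 := Real.sq_sqrt (le_max_right _ _)
          have hs2 : s' ^ 2 = max (r ^ 2 - d2) 0 := Real.sq_sqrt (le_max_right _ _)
          have hRr : R ^ 2 - r ^ 2 = 4 * h * r + 4 * h ^ 2 := by rw [hR]; ring
          have hpos : 0 < 4 * h * r + 4 * h ^ 2 := by positivity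
          have hdiff : S ^ 2 - s' ^ 2 ≤ 4 * h * r + 4 * h ^ 2 := by
            rw [hS2, hs2]
            rcases le_total d2 (r ^ 2) with hc | hc
            · rw [max_eq_left (by linarith), max_eq_left (by linarith)]
              linarith
            · have h1 : (r ^ 2 - d2) ⊔ 0 = 0 := max_eq_right (by linarith)
              rw [h1, sub_zero]
              exact max_le (by linarith) (by linarith)
          have hsq : (S - s') ^ 2 ≤ 4 * h * r + 4 * h ^ 2 := by nlinarith
          calc S - s' = Real.sqrt ((S - s') ^ 2) := (Real.sqrt_sq (by linarith)).symm
            _ ≤ Real.sqrt (4 * h * r + 4 * h ^ 2) := Real.sqrt_le_sqrt hsq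
        linarith
end
end
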